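/- arXiv:1202.5478 — 3 statements merged into one kernel-verified Lean document; each statement's English description precedes it below -/
import Mathlib

section
/- Let E be a directed graph, I an ideal of a ring containing the vertices of E such that I ∩ E^0 is hereditary and saturated, and let v ∈ E^0. Then the set (I ∩ E^0) ∪ (E^0 \ T(v)) is saturated, where T(v) is the tree of v. More precisely: if H ⊆ E^0 is hereditary and saturated and v ∈ E^0, then H ∪ (E^0 \ T(v)) is saturated. -/
structure PaperGraph where
  V : Type
  E : Type
  s : E → V
  r : E → V

namespace PaperGraph

/-- `v ≥ w`: there is a directed path (possibly trivial) from `v` to `w`. -/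
def Reaches (G : PaperGraph) (v w : G.V) : Prop :=
  Relation.ReflTransGen (fun a b => ∃ e : G.E, G.s e = a ∧ G.r e = b) v w

def Hereditary (G : PaperGraph) (X : Set G.V) : Prop :=
  ∀ e : G.E, G.s e ∈ X → G.r e ∈ X

def Saturated (G : PaperGraph) (X : Set G.V) : Prop :=
  ∀ v : G.V, {e : G.E | G.s e = v}.Finite → {e : G.E | G.s e = v}.Nonempty →
    (∀ e : G.E, G.s e = v → G.r e ∈ X) → v ∈ X

/-- The saturation of `X`: the smallest saturated subset containing `X`. -/
def saturation (G : PaperGraph) (X : Set G.V) : Set G.V :=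
  ⋂₀ {S : Set G.V | G.Saturated S ∧ X ⊆ S}

def tree (G : PaperGraph) (v : G.V) : Set G.V := {w | G.Reaches v w}

def MT1 (G : PaperGraph) (M : Set G.V) : Prop :=
  ∀ v w : G.V, w ∈ M → G.Reaches v w → v ∈ M

def MT2 (G : PaperGraph) (M : Set G.V) : Prop :=
  ∀ v ∈ M, {e : G.E | G.s e = v}.Finite → {e : G.E | G.s e = v}.Nonempty →
    ∃ e : G.E, G.s e = v ∧ G.r e ∈ M

def MT3on (G : PaperGraph) (M : Set G.V) : Prop :=
  ∀ v ∈ M, ∀ w ∈ M, ∃ y ∈ M, G.Reaches v y ∧ G.Reaches w y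

def MT3 (G : PaperGraph) : Prop :=
  ∀ v w : G.V, ∃ y : G.V, G.Reaches v y ∧ G.Reaches w y

def Omega (G : PaperGraph) (X : Set G.V) : Set G.V :=
  {w | w ∉ X ∧ ∀ v ∈ X, ¬ G.Reaches w v}

def OmegaV (G : PaperGraph) (v : G.V) : Set G.V :=
  {w | w ≠ v ∧ ¬ G.Reaches w v}

end PaperGraph

theorem union_compl_tree_saturated (G : PaperGraph) (H : Set G.V)
    (hher : G.Hereditary H) (hsat : G.Saturated H) (v : G.V) :
    G.Saturated (H ∪ (G.tree v)ᶜ) := by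
  intro u hfin hne hall
  by_cases hu : u ∈ G.tree v
  · left
    apply hsat u hfin hne
    intro e he
    rcases hall e he with h | h
    · exact h
    · exact absurd (hu.trans (Relation.ReflTransGen.single ⟨e, he, rfl⟩)) h
  · exact Or.inr hu
end

section
/- In a Z-graded ring R, a graded ideal I is prime if and only if it is graded prime, i.e., for all graded ideals J₁, J₂ with J₁J₂ ⊆ I, either J₁ ⊆ I or J₂ ⊆ I. -/
/-- A two-sided ideal of a `ℤ`-graded ring is graded if it contains all homogeneous
components of each of its elements. -/
def TwoSidedIdeal.IsGraded {A : Type} [Ring A] (𝒜 : ℤ → AddSubgroup A) [GradedRing 𝒜]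
    (I : TwoSidedIdeal A) : Prop :=
  ∀ x ∈ I, ∀ k : ℤ, (DirectSum.decompose 𝒜 x k : A) ∈ I

section Aux

variable {A : Type} [Ring A] (𝒜 : ℤ → AddSubgroup A) [GradedRing 𝒜]

/-- The coercion of the `k`-th homogeneous component, as an additive monoid hom. -/
def dcomp (k : ℤ) : A →+ A :=
  ((𝒜 k).subtype.comp ((DFinsupp.evalAddMonoidHom k).comp
    (DirectSum.decomposeAddEquiv 𝒜).toAddMonoidHom))

lemma dcomp_apply (k : ℤ) (x : A) : dcomp 𝒜 k x = (DirectSum.decompose 𝒜 x k : A) := rfl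

lemma dcomp_mul_homog {z : A} {d : ℤ} (hz : z ∈ 𝒜 d) (x : A) (k : ℤ) :
    dcomp 𝒜 (k + d) (x * z) = dcomp 𝒜 k x * z := by
  classical
  conv_lhs => rw [← DirectSum.sum_support_decompose 𝒜 x, Finset.sum_mul, map_sum]
  have : ∀ i ∈ (DirectSum.decompose 𝒜 x).support,
      dcomp 𝒜 (k + d) ((DirectSum.decompose 𝒜 x i : A) * z) =
      if i = k then (DirectSum.decompose 𝒜 x i : A) * z else 0 := by
    intro i _
    have hmem : (DirectSum.decompose 𝒜 x i : A) * z ∈ 𝒜 (i + d) :=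
      SetLike.mul_mem_graded (SetLike.coe_mem _) hz
    by_cases h : i = k
    · subst h
      rw [if_pos rfl, dcomp_apply, DirectSum.decompose_of_mem_same 𝒜 hmem]
    · rw [if_neg h, dcomp_apply, DirectSum.decompose_of_mem_ne 𝒜 hmem (by omega)]
  rw [Finset.sum_congr rfl this, Finset.sum_ite_eq']
  split_ifs with h
  · rfl
  · rw [dcomp_apply, show ((DirectSum.decompose 𝒜 x k : A)) = ((0 : 𝒜 k) : A) by
      rw [DFinsupp.notMem_support_iff.mp h]]
    simp

lemma dcomp_top_mul {x y z : A} {m n d : ℤ}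
    (hx : ∀ i > m, dcomp 𝒜 i x = 0) (hy : ∀ j > n, dcomp 𝒜 j y = 0) (hz : z ∈ 𝒜 d) :
    dcomp 𝒜 (m + d + n) (x * z * y) = dcomp 𝒜 m x * z * dcomp 𝒜 n y := by
  classical
  conv_lhs => rw [← DirectSum.sum_support_decompose 𝒜 y, Finset.mul_sum, map_sum]
  have key : ∀ j ∈ (DirectSum.decompose 𝒜 y).support,
      dcomp 𝒜 (m + d + n) (x * z * (DirectSum.decompose 𝒜 y j : A)) =
      if j = n then dcomp 𝒜 m x * z * (DirectSum.decompose 𝒜 y j : A) else 0 := by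
    intro j hj
    have hterm : dcomp 𝒜 (m + d + n) (x * z * (DirectSum.decompose 𝒜 y j : A)) =
        dcomp 𝒜 (m + n - j) x * z * (DirectSum.decompose 𝒜 y j : A) := by
      rw [show m + d + n = (m + d + n - j) + j by ring,
        dcomp_mul_homog 𝒜 (SetLike.coe_mem _) (x * z) (m + d + n - j),
        show m + d + n - j = (m + n - j) + d by ring,
        dcomp_mul_homog 𝒜 hz x (m + n - j)]
    by_cases h : j = n
    · rw [if_pos h, hterm, h, show m + n - n = m by ring]
    · rw [if_neg h, hterm]
      have hjn : j < n := by
        by_contra hc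
        have hgt : j > n := by omega
        have := hy j hgt
        rw [dcomp_apply] at this
        exact DFinsupp.mem_support_iff.mp hj (Subtype.coe_injective (by simpa using this))
      rw [hx (m + n - j) (by omega)]
      simp
  rw [Finset.sum_congr rfl key, Finset.sum_ite_eq']
  split_ifs with h
  · simp only [dcomp_apply]
  · have h0 : DirectSum.decompose 𝒜 y n = 0 := DFinsupp.notMem_support_iff.mp h
    simp only [dcomp_apply, h0, ZeroMemClass.coe_zero, mul_zero]

/-- Generators of the two-sided ideal generated by `a`. -/
def genSet (a : A) : Set A := {x | ∃ r s : A, x = r * a * s}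

/-- The two-sided ideal generated by `a`. -/
def genIdeal (a : A) : TwoSidedIdeal A :=
  TwoSidedIdeal.mk' (AddSubgroup.closure (genSet a) : Set A)
    (AddSubgroup.zero_mem _)
    (fun h1 h2 => AddSubgroup.add_mem _ h1 h2)
    (fun h => AddSubgroup.neg_mem _ h)
    (fun {x y} hy => by
      refine AddSubgroup.closure_induction
        (fun w hw => ?_) (by simpa using AddSubgroup.zero_mem _) (fun w v _ _ hw hv => by
          rw [mul_add]; exact AddSubgroup.add_mem _ hw hv)
        (fun w _ hw => by rw [mul_neg]; exact AddSubgroup.neg_mem _ hw) hy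
      · obtain ⟨r, s, rfl⟩ := hw
        exact AddSubgroup.subset_closure ⟨x * r, s, by noncomm_ring⟩)
    (fun {x y} hx => by
      refine AddSubgroup.closure_induction
        (fun w hw => ?_) (by simpa using AddSubgroup.zero_mem _) (fun w v _ _ hw hv => by
          rw [add_mul]; exact AddSubgroup.add_mem _ hw hv)
        (fun w _ hw => by rw [neg_mul]; exact AddSubgroup.neg_mem _ hw) hx
      · obtain ⟨r, s, rfl⟩ := hw
        exact AddSubgroup.subset_closure ⟨r, s * y, by noncomm_ring⟩)

lemma mem_genIdeal_iff (a x : A) :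
    x ∈ genIdeal a ↔ x ∈ AddSubgroup.closure (genSet a) :=
  TwoSidedIdeal.mem_mk' _ _ _ _ _ _ x

lemma self_mem_genIdeal (a : A) : a ∈ genIdeal a :=
  (mem_genIdeal_iff a a).mpr (AddSubgroup.subset_closure ⟨1, 1, by simp⟩)

lemma genIdeal_isGraded {a : A} {m : ℤ} (ha : a ∈ 𝒜 m) :
    (genIdeal a).IsGraded 𝒜 := by
  classical
  intro x hx k
  rw [← dcomp_apply, mem_genIdeal_iff] at *
  induction hx using AddSubgroup.closure_induction with
  | mem w hw =>
      obtain ⟨r, s, rfl⟩ := hw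
      have hrw : r * a * s = ∑ j ∈ (DirectSum.decompose 𝒜 s).support,
          r * a * (DirectSum.decompose 𝒜 s j : A) := by
        conv_lhs => rw [← DirectSum.sum_support_decompose 𝒜 s, Finset.mul_sum]
      rw [hrw, map_sum]
      refine AddSubgroup.sum_mem _ fun j _ => ?_
      have h1 : dcomp 𝒜 ((k - j - m + m) + j) (r * a * (DirectSum.decompose 𝒜 s j : A)) =
          dcomp 𝒜 (k - j - m + m) (r * a) * (DirectSum.decompose 𝒜 s j : A) :=
        dcomp_mul_homog 𝒜 (SetLike.coe_mem _) _ _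
      have h2 : dcomp 𝒜 (k - j - m + m) (r * a) = dcomp 𝒜 (k - j - m) r * a :=
        dcomp_mul_homog 𝒜 ha _ _
      rw [show k = k - j - m + m + j by ring, h1, h2]
      exact AddSubgroup.subset_closure ⟨dcomp 𝒜 (k - j - m) r, _, rfl⟩
  | zero => simpa using AddSubgroup.zero_mem _
  | add w v _ _ h1 h2 => rw [map_add]; exact AddSubgroup.add_mem _ h1 h2
  | neg w _ h => rw [map_neg]; exact AddSubgroup.neg_mem _ h

lemma genIdeal_mul_mem {I : TwoSidedIdeal A} {a b : A} (hab : ∀ r, a * r * b ∈ I) :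
    ∀ x ∈ genIdeal a, ∀ y ∈ genIdeal b, x * y ∈ I := by
  intro x hx y hy
  rw [mem_genIdeal_iff] at hx hy
  induction hx using AddSubgroup.closure_induction with
  | mem w hw =>
      obtain ⟨r, s, rfl⟩ := hw
      induction hy using AddSubgroup.closure_induction with
      | mem v hv =>
          obtain ⟨r', s', rfl⟩ := hv
          have h : r * a * s * (r' * b * s') = r * (a * (s * r') * b) * s' := by noncomm_ring
          rw [h]
          exact I.mul_mem_right _ _ (I.mul_mem_left _ _ (hab _))
      | zero => simpa using I.zero_mem
      | add v w _ _ h1 h2 => rw [mul_add]; exact I.add_mem h1 h2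
      | neg v _ h => rw [mul_neg]; exact I.neg_mem h
  | zero => simpa using I.zero_mem
  | add w v _ _ h1 h2 => rw [add_mul]; exact I.add_mem h1 h2
  | neg w _ h => rw [neg_mul]; exact I.neg_mem h

/-- Graded primeness implies primeness for homogeneous elements. -/
lemma homog_prime {I : TwoSidedIdeal A}
    (hg : ∀ J₁ J₂ : TwoSidedIdeal A, J₁.IsGraded 𝒜 → J₂.IsGraded 𝒜 →
      (∀ a ∈ J₁, ∀ b ∈ J₂, a * b ∈ I) → J₁ ≤ I ∨ J₂ ≤ I)
    {a b : A} {m n : ℤ} (ha : a ∈ 𝒜 m) (hb : b ∈ 𝒜 n)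
    (hab : ∀ r, a * r * b ∈ I) : a ∈ I ∨ b ∈ I := by
  rcases hg (genIdeal a) (genIdeal b) (genIdeal_isGraded 𝒜 ha) (genIdeal_isGraded 𝒜 hb)
    (genIdeal_mul_mem hab) with h | h
  · exact Or.inl (h (self_mem_genIdeal a))
  · exact Or.inr (h (self_mem_genIdeal b))

/-- From a non-member of a graded ideal, extract an element with the same residue whose
top homogeneous component is not in the ideal. -/
lemma purify (I : TwoSidedIdeal A) {a : A} (haI : a ∉ I) :
    ∃ (a' : A) (m : ℤ), a - a' ∈ I ∧ (∀ i > m, dcomp 𝒜 i a' = 0) ∧ dcomp 𝒜 m a' ∉ I := by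
  classical
  set F : Finset ℤ := (DirectSum.decompose 𝒜 a).support.filter
    (fun k => (DirectSum.decompose 𝒜 a k : A) ∈ I) with hF
  set p : A := ∑ k ∈ F, (DirectSum.decompose 𝒜 a k : A) with hp
  have hpI : p ∈ I := I.finsetSum_mem _ _ fun k hk => (Finset.mem_filter.mp hk).2
  have hcomp : ∀ k, dcomp 𝒜 k (a - p) = if k ∈ F then 0 else dcomp 𝒜 k a := by
    intro k
    have hpk : dcomp 𝒜 k p = if k ∈ F then (DirectSum.decompose 𝒜 a k : A) else 0 := by
      rw [hp, map_sum]
      have : ∀ j ∈ F, dcomp 𝒜 k (DirectSum.decompose 𝒜 a j : A) =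
          if j = k then (DirectSum.decompose 𝒜 a j : A) else 0 := by
        intro j _
        by_cases h : j = k
        · subst h
          rw [if_pos rfl, dcomp_apply, DirectSum.decompose_of_mem_same 𝒜 (SetLike.coe_mem _)]
        · rw [if_neg h, dcomp_apply, DirectSum.decompose_of_mem_ne 𝒜 (SetLike.coe_mem _) h]
      rw [Finset.sum_congr rfl this, Finset.sum_ite_eq']
    rw [map_sub, hpk]
    split_ifs with h
    · rw [dcomp_apply, sub_self]
    · rw [sub_zero]
  have ha'I : a - p ∉ I := fun h => haI (by simpa using I.add_mem h hpI)
  have ha'0 : a - p ≠ 0 := fun h => ha'I (h ▸ I.zero_mem)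
  have hne : ((DirectSum.decompose 𝒜 (a - p)).support).Nonempty := by
    rw [Finset.nonempty_iff_ne_empty]
    intro h
    apply ha'0
    have h0 := DFinsupp.support_eq_empty.mp h
    calc a - p = (DirectSum.decompose 𝒜).symm (DirectSum.decompose 𝒜 (a - p)) := by simp
    _ = 0 := by rw [h0]; simp
  refine ⟨a - p, (DirectSum.decompose 𝒜 (a - p)).support.max' hne, by simpa using hpI, ?_, ?_⟩
  · intro i hi
    rw [dcomp_apply]
    have hnm : i ∉ (DirectSum.decompose 𝒜 (a - p)).support :=
      fun hmem => absurd (Finset.le_max' _ _ hmem) (by omega)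
    rw [DFinsupp.notMem_support_iff.mp hnm]; simp
  · set m := (DirectSum.decompose 𝒜 (a - p)).support.max' hne with hm
    have hmem : m ∈ (DirectSum.decompose 𝒜 (a - p)).support := Finset.max'_mem _ _
    have hne0 : dcomp 𝒜 m (a - p) ≠ 0 := by
      rw [dcomp_apply]; intro h
      exact DFinsupp.mem_support_iff.mp hmem (Subtype.coe_injective (by simpa using h))
    intro hmI
    have hc := hcomp m
    by_cases hmF : m ∈ F
    · exact hne0 (by rw [hc, if_pos hmF])
    · rw [hc, if_neg hmF] at hmI hne0
      apply hmF
      rw [hF, Finset.mem_filter]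
      refine ⟨DFinsupp.mem_support_iff.mpr (fun h => hne0 ?_), by rwa [dcomp_apply] at hmI⟩
      rw [dcomp_apply, h]; simp

end Aux

/-- In a `ℤ`-graded ring, a graded (two-sided) ideal is prime if and only if it is graded
prime, i.e. `J₁J₂ ⊆ I → J₁ ⊆ I ∨ J₂ ⊆ I` for all *graded* ideals `J₁, J₂`. -/
theorem graded_ideal_prime_iff_graded_prime {A : Type} [Ring A]
    (𝒜 : ℤ → AddSubgroup A) [GradedRing 𝒜]
    (I : TwoSidedIdeal A) (hI : I.IsGraded 𝒜) :
    (∀ J₁ J₂ : TwoSidedIdeal A, (∀ a ∈ J₁, ∀ b ∈ J₂, a * b ∈ I) → J₁ ≤ I ∨ J₂ ≤ I) ↔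
    (∀ J₁ J₂ : TwoSidedIdeal A, J₁.IsGraded 𝒜 → J₂.IsGraded 𝒜 →
      (∀ a ∈ J₁, ∀ b ∈ J₂, a * b ∈ I) → J₁ ≤ I ∨ J₂ ≤ I) := by
  classical
  constructor
  · exact fun h J₁ J₂ _ _ hJ => h J₁ J₂ hJ
  · intro hg J₁ J₂ hJ
    by_contra hcon
    push_neg at hcon
    obtain ⟨h1, h2⟩ := hcon
    obtain ⟨a, haJ, haI⟩ := SetLike.not_le_iff_exists.mp h1
    obtain ⟨b, hbJ, hbI⟩ := SetLike.not_le_iff_exists.mp h2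
    obtain ⟨a', m, hapI, hma, hmaI⟩ := purify 𝒜 I haI
    obtain ⟨b', n, hbqI, hnb, hnbI⟩ := purify 𝒜 I hbI
    -- a' * r * b' ∈ I for all r
    have hab' : ∀ r, a' * r * b' ∈ I := by
      intro r
      have h1 : a' * r * b' = (a * r) * b - (a * r) * (b - b') - ((a - a') * r) * b +
          ((a - a') * r) * (b - b') := by noncomm_ring
      rw [h1]
      refine I.add_mem (I.sub_mem (I.sub_mem ?_ ?_) ?_) ?_
      · exact hJ _ (J₁.mul_mem_right _ _ haJ) _ hbJ
      · exact I.mul_mem_left _ _ hbqI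
      · exact I.mul_mem_right _ _ (I.mul_mem_right _ _ hapI)
      · exact I.mul_mem_left _ _ hbqI
    -- the top components multiply into I against any ring element
    have hkey : ∀ r : A, dcomp 𝒜 m a' * r * dcomp 𝒜 n b' ∈ I := by
      intro r
      have hr : dcomp 𝒜 m a' * r * dcomp 𝒜 n b' =
          ∑ d ∈ (DirectSum.decompose 𝒜 r).support,
            dcomp 𝒜 m a' * (DirectSum.decompose 𝒜 r d : A) * dcomp 𝒜 n b' := by
        conv_lhs => rw [← DirectSum.sum_support_decompose 𝒜 r, Finset.mul_sum, Finset.sum_mul]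
      rw [hr]
      refine I.finsetSum_mem _ _ fun d _ => ?_
      have h3 := hI _ (hab' (DirectSum.decompose 𝒜 r d : A)) (m + d + n)
      rw [← dcomp_apply, dcomp_top_mul 𝒜 hma hnb (SetLike.coe_mem _)] at h3
      exact h3
    rcases homog_prime 𝒜 hg (dcomp_apply 𝒜 m a' ▸ SetLike.coe_mem _)
      (dcomp_apply 𝒜 n b' ▸ SetLike.coe_mem _) hkey with h | h
    · exact hmaI h
    · exact hnbI h
end

section
/- Let E be a graph, R a unital commutative ring, and (H₁,S₁), (H₂,S₂) admissible pairs in E. Then I(H₁,S₁) ∩ I(H₂,S₂) = I(H₁∩H₂, (H₁∪S₁)∩(H₂∪S₂)∩B_{H₁∩H₂}) as ideals of L_R(E). -/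
structure LPGraph where
  V : Type
  E : Type
  s : E → V
  r : E → V

namespace LPGraph

/-- `v ≥ w`: there is a directed path (possibly trivial) from `v` to `w`. -/
def Reaches (G : LPGraph) (v w : G.V) : Prop :=
  Relation.ReflTransGen (fun a b => ∃ e : G.E, G.s e = a ∧ G.r e = b) v w

def Hereditary (G : LPGraph) (X : Set G.V) : Prop :=
  ∀ e : G.E, G.s e ∈ X → G.r e ∈ X

def Saturated (G : LPGraph) (X : Set G.V) : Prop :=
  ∀ v : G.V, {e : G.E | G.s e = v}.Finite → {e : G.E | G.s e = v}.Nonempty →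
    (∀ e : G.E, G.s e = v → G.r e ∈ X) → v ∈ X

/-- The saturation of `X`: the smallest saturated subset containing `X`. -/
def saturation (G : LPGraph) (X : Set G.V) : Set G.V :=
  ⋂₀ {S : Set G.V | G.Saturated S ∧ X ⊆ S}

def tree (G : LPGraph) (v : G.V) : Set G.V := {w | G.Reaches v w}

def MT1 (G : LPGraph) (M : Set G.V) : Prop :=
  ∀ v w : G.V, w ∈ M → G.Reaches v w → v ∈ M

def MT2 (G : LPGraph) (M : Set G.V) : Prop :=
  ∀ v ∈ M, {e : G.E | G.s e = v}.Finite → {e : G.E | G.s e = v}.Nonempty →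
    ∃ e : G.E, G.s e = v ∧ G.r e ∈ M

def MT3on (G : LPGraph) (M : Set G.V) : Prop :=
  ∀ v ∈ M, ∀ w ∈ M, ∃ y ∈ M, G.Reaches v y ∧ G.Reaches w y

def MT3 (G : LPGraph) : Prop :=
  ∀ v w : G.V, ∃ y : G.V, G.Reaches v y ∧ G.Reaches w y

def Omega (G : LPGraph) (X : Set G.V) : Set G.V :=
  {w | w ∉ X ∧ ∀ v ∈ X, ¬ G.Reaches w v}

def OmegaV (G : LPGraph) (v : G.V) : Set G.V :=
  {w | w ≠ v ∧ ¬ G.Reaches w v}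

end LPGraph

namespace LPGraph

def IsBifurcation (G : LPGraph) (v : G.V) : Prop :=
  ∃ e f : G.E, e ≠ f ∧ G.s e = v ∧ G.s f = v

def IsPathList (G : LPGraph) (l : List G.E) : Prop :=
  l.Chain' (fun e f => G.r e = G.s f)

def IsClosedPath (G : LPGraph) (v : G.V) (l : List G.E) : Prop :=
  l ≠ [] ∧ G.IsPathList l ∧ (∀ e ∈ l.head?, G.s e = v) ∧ (∀ e ∈ l.getLast?, G.r e = v)

def IsClosedSimplePath (G : LPGraph) (v : G.V) (l : List G.E) : Prop :=
  G.IsClosedPath v l ∧ ∀ e ∈ l.tail, G.s e ≠ v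

def ConditionK (G : LPGraph) : Prop :=
  ∀ v : G.V, (¬ ∃ l : List G.E, G.IsClosedPath v l) ∨
    (∃ l₁ l₂ : List G.E, G.IsClosedSimplePath v l₁ ∧ G.IsClosedSimplePath v l₂ ∧ l₁ ≠ l₂)

def ConditionL (G : LPGraph) : Prop :=
  ∀ (v : G.V) (l : List G.E), G.IsClosedSimplePath v l →
    ∃ e ∈ l, ∃ f : G.E, f ≠ e ∧ G.s f = G.s e

/-- `v` is a line point: no vertex in the tree of `v` is a bifurcation or the base of a
closed path. -/
def LinePoint (G : LPGraph) (v : G.V) : Prop :=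
  ∀ w : G.V, G.Reaches v w →
    ¬ G.IsBifurcation w ∧ ¬ ∃ l : List G.E, G.IsClosedPath w l

/-- `B_H`: vertices outside `H` emitting infinitely many edges, but finitely many
(and at least one) into `E⁰ \ H`. -/
def BH (G : LPGraph) (H : Set G.V) : Set G.V :=
  {v | v ∉ H ∧ {e : G.E | G.s e = v}.Infinite ∧
    {e : G.E | G.s e = v ∧ G.r e ∉ H}.Finite ∧
    {e : G.E | G.s e = v ∧ G.r e ∉ H}.Nonempty}

/-- An admissible pair: `H` hereditary saturated, `S ⊆ B_H`. -/
def Admissible (G : LPGraph) (H S : Set G.V) : Prop :=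
  G.Hereditary H ∧ G.Saturated H ∧ S ⊆ G.BH H

/-- Finite paths in `G`, indexed by source and range. -/
inductive Path (G : LPGraph) : G.V → G.V → Type
  | nil (v : G.V) : Path G v v
  | cons (e : G.E) {w : G.V} (p : Path G (G.r e) w) : Path G (G.s e) w

def Path.length {G : LPGraph} : ∀ {v w : G.V}, Path G v w → ℕ
  | _, _, .nil _ => 0
  | _, _, .cons _ p => p.length + 1

/-- The path contains no bifurcations among the sources of its edges. -/
def Path.NoBif {G : LPGraph} : ∀ {v w : G.V}, Path G v w → Prop
  | _, _, .nil _ => True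
  | _, _, .cons e p => (∀ f : _, LPGraph.s _ f = LPGraph.s _ e → f = e) ∧ p.NoBif

end LPGraph

/-- Generators of the Leavitt path algebra: vertices, real edges and ghost edges. -/
inductive LGen (G : LPGraph) : Type
  | vertex : G.V → LGen G
  | edge : G.E → LGen G
  | ghost : G.E → LGen G

variable (R : Type) [CommRing R] (G : LPGraph)

noncomputable def fv (v : G.V) : FreeAlgebra R (LGen G) := FreeAlgebra.ι R (LGen.vertex v)
noncomputable def fe (e : G.E) : FreeAlgebra R (LGen G) := FreeAlgebra.ι R (LGen.edge e)
noncomputable def fg (e : G.E) : FreeAlgebra R (LGen G) := FreeAlgebra.ι R (LGen.ghost e)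

/-- The defining relations of the Leavitt path algebra. -/
inductive LRel : FreeAlgebra R (LGen G) → FreeAlgebra R (LGen G) → Prop
  | idem (v : G.V) : LRel (fv R G v * fv R G v) (fv R G v)
  | orth (v w : G.V) (h : v ≠ w) : LRel (fv R G v * fv R G w) 0
  | edge_src (e : G.E) : LRel (fv R G (G.s e) * fe R G e) (fe R G e)
  | edge_rng (e : G.E) : LRel (fe R G e * fv R G (G.r e)) (fe R G e)
  | ghost_rng (e : G.E) : LRel (fv R G (G.r e) * fg R G e) (fg R G e)
  | ghost_src (e : G.E) : LRel (fg R G e * fv R G (G.s e)) (fg R G e)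
  | ck1_same (e : G.E) : LRel (fg R G e * fe R G e) (fv R G (G.r e))
  | ck1_diff (e f : G.E) (h : e ≠ f) : LRel (fg R G e * fe R G f) 0
  | ck2 (v : G.V) (h1 : {e : G.E | G.s e = v}.Finite)
      (h2 : {e : G.E | G.s e = v}.Nonempty) :
      LRel (fv R G v) (∑ e ∈ h1.toFinset, fe R G e * fg R G e)

/-- The Leavitt path algebra `L_R(E)`. -/
abbrev LPA := RingQuot (LRel R G)

noncomputable def Xv (v : G.V) : LPA R G := RingQuot.mkAlgHom R (LRel R G) (fv R G v)
noncomputable def Xe (e : G.E) : LPA R G := RingQuot.mkAlgHom R (LRel R G) (fe R G e)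
noncomputable def Xg (e : G.E) : LPA R G := RingQuot.mkAlgHom R (LRel R G) (fg R G e)

open MulOpposite in
/-- The involution on `L_R(E)`, built from the universal property, sending
`v ↦ v`, `e ↦ e*`, `e* ↦ e` and reversing products. -/
noncomputable def preStar : FreeAlgebra R (LGen G) →ₐ[R] (LPA R G)ᵐᵒᵖ :=
  FreeAlgebra.lift R fun x => match x with
    | LGen.vertex v => op (Xv R G v)
    | LGen.edge e => op (Xg R G e)
    | LGen.ghost e => op (Xe R G e)

section starlemmas

lemma Xv_mul_self (v : G.V) : Xv R G v * Xv R G v = Xv R G v := by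
  simpa only [Xv, map_mul] using RingQuot.mkAlgHom_rel R (LRel.idem (R := R) (G := G) v)

lemma Xv_mul_Xv (v w : G.V) (h : v ≠ w) : Xv R G v * Xv R G w = 0 := by
  simpa only [Xv, map_mul, map_zero] using
    RingQuot.mkAlgHom_rel R (LRel.orth (R := R) (G := G) v w h)

lemma Xv_mul_Xe (e : G.E) : Xv R G (G.s e) * Xe R G e = Xe R G e := by
  simpa only [Xv, Xe, map_mul] using RingQuot.mkAlgHom_rel R (LRel.edge_src (R := R) (G := G) e)

lemma Xe_mul_Xv (e : G.E) : Xe R G e * Xv R G (G.r e) = Xe R G e := by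
  simpa only [Xv, Xe, map_mul] using RingQuot.mkAlgHom_rel R (LRel.edge_rng (R := R) (G := G) e)

lemma Xv_mul_Xg (e : G.E) : Xv R G (G.r e) * Xg R G e = Xg R G e := by
  simpa only [Xv, Xg, map_mul] using RingQuot.mkAlgHom_rel R (LRel.ghost_rng (R := R) (G := G) e)

lemma Xg_mul_Xv (e : G.E) : Xg R G e * Xv R G (G.s e) = Xg R G e := by
  simpa only [Xv, Xg, map_mul] using RingQuot.mkAlgHom_rel R (LRel.ghost_src (R := R) (G := G) e)

lemma Xg_mul_Xe_same (e : G.E) : Xg R G e * Xe R G e = Xv R G (G.r e) := by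
  simpa only [Xv, Xe, Xg, map_mul] using
    RingQuot.mkAlgHom_rel R (LRel.ck1_same (R := R) (G := G) e)

lemma Xg_mul_Xe_diff (e f : G.E) (h : e ≠ f) : Xg R G e * Xe R G f = 0 := by
  simpa only [Xe, Xg, map_mul, map_zero] using
    RingQuot.mkAlgHom_rel R (LRel.ck1_diff (R := R) (G := G) e f h)

lemma Xv_ck2 (v : G.V) (h1 : {e : G.E | G.s e = v}.Finite)
    (h2 : {e : G.E | G.s e = v}.Nonempty) :
    Xv R G v = ∑ e ∈ h1.toFinset, Xe R G e * Xg R G e := by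
  simpa only [Xv, Xe, Xg, map_mul, map_sum] using
    RingQuot.mkAlgHom_rel R (LRel.ck2 (R := R) (G := G) v h1 h2)

open MulOpposite in
lemma preStar_rel : ∀ ⦃a b : FreeAlgebra R (LGen G)⦄, LRel R G a b →
    preStar R G a = preStar R G b := by
  intro a b h
  induction h with
  | idem v =>
      simp only [map_mul, preStar, fv, FreeAlgebra.lift_ι_apply, ← op_mul]
      exact congrArg op (Xv_mul_self R G v)
  | orth v w h =>
      simp only [map_mul, map_zero, preStar, fv, FreeAlgebra.lift_ι_apply, ← op_mul]
      rw [Xv_mul_Xv R G w v h.symm]; rfl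
  | edge_src e =>
      simp only [map_mul, preStar, fv, fe, FreeAlgebra.lift_ι_apply, ← op_mul]
      exact congrArg op (Xg_mul_Xv R G e)
  | edge_rng e =>
      simp only [map_mul, preStar, fv, fe, FreeAlgebra.lift_ι_apply, ← op_mul]
      exact congrArg op (Xv_mul_Xg R G e)
  | ghost_rng e =>
      simp only [map_mul, preStar, fv, fg, FreeAlgebra.lift_ι_apply, ← op_mul]
      exact congrArg op (Xe_mul_Xv R G e)
  | ghost_src e =>
      simp only [map_mul, preStar, fv, fg, FreeAlgebra.lift_ι_apply, ← op_mul]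
      exact congrArg op (Xv_mul_Xe R G e)
  | ck1_same e =>
      simp only [map_mul, preStar, fv, fe, fg, FreeAlgebra.lift_ι_apply, ← op_mul]
      exact congrArg op (Xg_mul_Xe_same R G e)
  | ck1_diff e f h =>
      simp only [map_mul, map_zero, preStar, fe, fg, FreeAlgebra.lift_ι_apply, ← op_mul]
      rw [Xg_mul_Xe_diff R G f e h.symm]; rfl
  | ck2 v h1 h2 =>
      simp only [map_sum, map_mul, preStar, fv, fe, fg, FreeAlgebra.lift_ι_apply, ← op_mul,
        ← Finset.op_sum]
      exact congrArg op (Xv_ck2 R G v h1 h2)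

end starlemmas

open MulOpposite in
noncomputable def starHom : LPA R G →ₐ[R] (LPA R G)ᵐᵒᵖ :=
  RingQuot.liftAlgHom R ⟨preStar R G, preStar_rel R G⟩

/-- The canonical involution (`*`-operation) on `L_R(E)`. -/
noncomputable def lpaStar (x : LPA R G) : LPA R G := MulOpposite.unop (starHom R G x)

/-- The element of `L_R(E)` associated to a path (product of real edges;
a trivial path gives the vertex). -/
noncomputable def pathE : ∀ {v w : G.V}, G.Path v w → LPA R G
  | _, _, .nil v => Xv R G v
  | _, _, .cons e p => Xe R G e * pathE p

/-- The ghost element `α*` of `L_R(E)` associated to a path `α`. -/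
noncomputable def pathG : ∀ {v w : G.V}, G.Path v w → LPA R G
  | _, _, .nil v => Xv R G v
  | _, _, .cons e p => pathG p * Xg R G e

/-- The homogeneous lpaComponent of degree `k` of `L_R(E)`:
the `R`-span of elements `αβ*` with `|α| - |β| = k`. -/
noncomputable def lpaComponent (k : ℤ) : Submodule R (LPA R G) :=
  Submodule.span R {x : LPA R G |
    ∃ (v₁ v₂ w : G.V) (α : G.Path v₁ w) (β : G.Path v₂ w),
      (α.length : ℤ) - (β.length : ℤ) = k ∧ x = pathE R G α * pathG R G β}

/-- A two-sided ideal of `L_R(E)` is graded if each of its elements is an `R`-linear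
combination of homogeneous elements belonging to the ideal. -/
def IsGraded (I : TwoSidedIdeal (LPA R G)) : Prop :=
  ∀ x ∈ I, x ∈ Submodule.span R
    (⋃ k : ℤ, (I : Set (LPA R G)) ∩ (lpaComponent R G k : Set (LPA R G)))

/-- A basic ideal: `r • x ∈ I` with `r ≠ 0` implies `x ∈ I`, for `x` a vertex or an
element of the form `v - ∑ᵢ eᵢeᵢ*` with `s(eᵢ) = v`. -/
def IsBasic (I : TwoSidedIdeal (LPA R G)) : Prop :=
  (∀ (r : R) (v : G.V), r ≠ 0 → r • Xv R G v ∈ I → Xv R G v ∈ I) ∧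
  (∀ (r : R) (v : G.V) (F : Finset G.E), r ≠ 0 → (∀ e ∈ F, G.s e = v) →
    r • (Xv R G v - ∑ e ∈ F, Xe R G e * Xg R G e) ∈ I →
    (Xv R G v - ∑ e ∈ F, Xe R G e * Xg R G e) ∈ I)

/-- `v^H = v - ∑_{s(e)=v, r(e)∉H} ee*`. -/
noncomputable def vH (H : Set G.V) (v : G.V) : LPA R G :=
  Xv R G v - ∑ᶠ (e : G.E) (_ : G.s e = v ∧ G.r e ∉ H), Xe R G e * Xg R G e

/-- `I(H,S)`: the two-sided ideal generated by `{v : v ∈ H} ∪ {v^H : v ∈ S}`. -/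
noncomputable def IHS (H S : Set G.V) : TwoSidedIdeal (LPA R G) :=
  TwoSidedIdeal.span ((fun v => Xv R G v) '' H ∪ (fun v => vH R G H v) '' S)

/-- The quotient ring of `L_R(E)` by a two-sided ideal, as an `R`-algebra. -/
abbrev QuotLPA (I : TwoSidedIdeal (LPA R G)) := RingQuot (fun a b : LPA R G => a - b ∈ I)

/-- The quotient graph `E/(H,S)`. -/
def quotGraph (H S : Set G.V) (hH : G.Hereditary H) : LPGraph where
  V := {v : G.V // v ∉ H} ⊕ {v : G.V // v ∈ G.BH H ∧ v ∉ S}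
  E := {e : G.E // G.r e ∉ H} ⊕ {e : G.E // G.r e ∈ G.BH H ∧ G.r e ∉ S}
  s := fun x => match x with
    | Sum.inl e => Sum.inl ⟨G.s e.1, fun h => e.2 (hH e.1 h)⟩
    | Sum.inr e => Sum.inl ⟨G.s e.1, fun h => e.2.1.1 (hH e.1 h)⟩
  r := fun x => match x with
    | Sum.inl e => Sum.inl ⟨G.r e.1, e.2⟩
    | Sum.inr e => Sum.inr ⟨G.r e.1, e.2⟩

namespace LPAproof
open LPGraph

variable (R : Type) [CommRing R] (G : LPGraph)

lemma Xv_mul_Xe' (w : G.V) (f : G.E) (h : G.s f ≠ w) : Xv R G w * Xe R G f = 0 := by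
  rw [← Xv_mul_Xe R G f, ← mul_assoc, Xv_mul_Xv R G w (G.s f) (Ne.symm h), zero_mul]

lemma Xe_mul_Xv' (w : G.V) (f : G.E) (h : G.r f ≠ w) : Xe R G f * Xv R G w = 0 := by
  rw [← Xe_mul_Xv R G f, mul_assoc, Xv_mul_Xv R G (G.r f) w h, mul_zero]

lemma Xv_mul_Xg' (w : G.V) (f : G.E) (h : G.r f ≠ w) : Xv R G w * Xg R G f = 0 := by
  rw [← Xv_mul_Xg R G f, ← mul_assoc, Xv_mul_Xv R G w (G.r f) (Ne.symm h), zero_mul]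

lemma Xg_mul_Xv' (w : G.V) (f : G.E) (h : G.s f ≠ w) : Xg R G f * Xv R G w = 0 := by
  rw [← Xg_mul_Xv R G f, mul_assoc, Xv_mul_Xv R G (G.s f) w h, mul_zero]

lemma Xv_mul_Xe_of {w : G.V} {f : G.E} (h : G.s f = w) :
    Xv R G w * Xe R G f = Xe R G f := by rw [← h]; exact Xv_mul_Xe R G f

lemma Xe_mul_Xv_of {w : G.V} {f : G.E} (h : G.r f = w) :
    Xe R G f * Xv R G w = Xe R G f := by rw [← h]; exact Xe_mul_Xv R G f

lemma Xv_mul_Xg_of {w : G.V} {f : G.E} (h : G.r f = w) :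
    Xv R G w * Xg R G f = Xg R G f := by rw [← h]; exact Xv_mul_Xg R G f

lemma Xg_mul_Xv_of {w : G.V} {f : G.E} (h : G.s f = w) :
    Xg R G f * Xv R G w = Xg R G f := by rw [← h]; exact Xg_mul_Xv R G f

/-! ### Star API -/

noncomputable def starLM : LPA R G →ₗ[R] LPA R G :=
  (MulOpposite.opLinearEquiv R).symm.toLinearMap ∘ₗ (starHom R G).toLinearMap

lemma lpaStar_eq (x : LPA R G) : lpaStar R G x = starLM R G x := rfl

lemma lpaStar_mul (a b : LPA R G) :
    lpaStar R G (a * b) = lpaStar R G b * lpaStar R G a := by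
  simp [lpaStar, map_mul]

lemma lpaStar_add (a b : LPA R G) :
    lpaStar R G (a + b) = lpaStar R G a + lpaStar R G b := by
  simp [lpaStar, map_add]

lemma lpaStar_sub (a b : LPA R G) :
    lpaStar R G (a - b) = lpaStar R G a - lpaStar R G b := by
  simp [lpaStar, map_sub]

lemma lpaStar_smul (r : R) (a : LPA R G) :
    lpaStar R G (r • a) = r • lpaStar R G a := by
  simp [lpaStar, map_smul]

lemma lpaStar_zero : lpaStar R G 0 = 0 := by simp [lpaStar]

lemma lpaStar_one : lpaStar R G 1 = 1 := by simp [lpaStar]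

lemma lpaStar_sum {ι : Type*} (s : Finset ι) (f : ι → LPA R G) :
    lpaStar R G (∑ i ∈ s, f i) = ∑ i ∈ s, lpaStar R G (f i) := by
  simp only [lpaStar_eq, map_sum]

lemma lpaStar_Xv (v : G.V) : lpaStar R G (Xv R G v) = Xv R G v := by
  simp [lpaStar, starHom, Xv, RingQuot.liftAlgHom_mkAlgHom_apply, preStar, fv,
    FreeAlgebra.lift_ι_apply]

lemma lpaStar_Xe (e : G.E) : lpaStar R G (Xe R G e) = Xg R G e := by
  simp [lpaStar, starHom, Xe, RingQuot.liftAlgHom_mkAlgHom_apply, preStar, fe,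
    FreeAlgebra.lift_ι_apply]

lemma lpaStar_Xg (e : G.E) : lpaStar R G (Xg R G e) = Xe R G e := by
  simp [lpaStar, starHom, Xg, RingQuot.liftAlgHom_mkAlgHom_apply, preStar, fg,
    FreeAlgebra.lift_ι_apply]

lemma lpaStar_algebraMap (r : R) :
    lpaStar R G (algebraMap R (LPA R G) r) = algebraMap R (LPA R G) r := by
  simp [lpaStar, AlgHom.commutes]

lemma lpaStar_lpaStar (x : LPA R G) : lpaStar R G (lpaStar R G x) = x := by
  obtain ⟨y, rfl⟩ := RingQuot.mkAlgHom_surjective R (LRel R G) x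
  induction y using FreeAlgebra.induction with
  | grade0 r =>
      rw [AlgHom.commutes]
      rw [lpaStar_algebraMap, lpaStar_algebraMap]
  | grade1 i =>
      cases i with
      | vertex v =>
          show lpaStar R G (lpaStar R G (Xv R G v)) = Xv R G v
          rw [lpaStar_Xv, lpaStar_Xv]
      | edge e =>
          show lpaStar R G (lpaStar R G (Xe R G e)) = Xe R G e
          rw [lpaStar_Xe, lpaStar_Xg]
      | ghost e =>
          show lpaStar R G (lpaStar R G (Xg R G e)) = Xg R G e
          rw [lpaStar_Xg, lpaStar_Xe]
  | mul a b ha hb =>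
      rw [map_mul, lpaStar_mul, lpaStar_mul, ha, hb]
  | add a b ha hb =>
      rw [map_add, lpaStar_add, lpaStar_add, ha, hb]

end LPAproof
namespace LPAproof
variable (R : Type) [CommRing R] (G : LPGraph)

/-! ### Products of edges and ghost edges along lists -/

noncomputable def listE (l : List G.E) : LPA R G := (l.map (Xe R G)).prod
noncomputable def listG (l : List G.E) : LPA R G := (l.map (Xg R G)).reverse.prod

@[simp] lemma listE_nil : listE R G [] = 1 := rfl
@[simp] lemma listG_nil : listG R G [] = 1 := rfl

lemma listE_cons (f : G.E) (t : List G.E) :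
    listE R G (f :: t) = Xe R G f * listE R G t := by
  simp [listE]

lemma listG_cons (f : G.E) (t : List G.E) :
    listG R G (f :: t) = listG R G t * Xg R G f := by
  simp [listG]

lemma listE_append (l₁ l₂ : List G.E) :
    listE R G (l₁ ++ l₂) = listE R G l₁ * listE R G l₂ := by
  simp [listE]

lemma listG_append (l₁ l₂ : List G.E) :
    listG R G (l₁ ++ l₂) = listG R G l₂ * listG R G l₁ := by
  simp [listG]

lemma lpaStar_listE (l : List G.E) : lpaStar R G (listE R G l) = listG R G l := by
  induction l with
  | nil => simpa using lpaStar_one R G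
  | cons f t ih => rw [listE_cons, lpaStar_mul, ih, lpaStar_Xe, listG_cons]

lemma lpaStar_listG (l : List G.E) : lpaStar R G (listG R G l) = listE R G l := by
  induction l with
  | nil => simpa using lpaStar_one R G
  | cons f t ih => rw [listG_cons, lpaStar_mul, ih, lpaStar_Xg, listE_cons]

/-! ### Path predicates on lists -/

def VP : List G.E → Prop
  | [] => True
  | [_] => True
  | e :: f :: t => G.r e = G.s f ∧ VP (f :: t)

def EndsAt : List G.E → G.V → Prop
  | [], _ => True
  | [e], v => G.r e = v
  | _ :: e :: t, v => EndsAt (e :: t) v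

def StartsAt : List G.E → G.V → Prop
  | [], _ => True
  | e :: _, v => G.s e = v

@[simp] lemma VP_nil : VP G [] := trivial
@[simp] lemma VP_singleton (e : G.E) : VP G [e] := trivial
lemma VP_cons_cons {e f : G.E} {t : List G.E} :
    VP G (e :: f :: t) ↔ G.r e = G.s f ∧ VP G (f :: t) := Iff.rfl

@[simp] lemma endsAt_nil (v : G.V) : EndsAt G [] v := trivial
lemma endsAt_singleton {e : G.E} {v : G.V} : EndsAt G [e] v ↔ G.r e = v := Iff.rfl
lemma endsAt_cons_cons {e f : G.E} {t : List G.E} {v : G.V} :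
    EndsAt G (e :: f :: t) v ↔ EndsAt G (f :: t) v := Iff.rfl

lemma endsAt_unique {l : List G.E} {v w : G.V} (hne : l ≠ [])
    (hv : EndsAt G l v) (hw : EndsAt G l w) : v = w := by
  induction l with
  | nil => exact absurd rfl hne
  | cons f t ih =>
      cases t with
      | nil => exact (endsAt_singleton G).1 hv ▸ (endsAt_singleton G).1 hw
      | cons g t' => exact ih (by simp) hv hw

lemma VP_tail {f : G.E} {t : List G.E} (h : VP G (f :: t)) : VP G t := by
  cases t with
  | nil => trivial
  | cons g t' => exact ((VP_cons_cons G).1 h).2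

lemma endsAt_tail {f : G.E} {t : List G.E} {v : G.V} (ht : t ≠ [])
    (h : EndsAt G (f :: t) v) : EndsAt G t v := by
  cases t with
  | nil => exact absurd rfl ht
  | cons g t' => exact h

lemma endsAt_append {l₁ l₂ : List G.E} {v : G.V} (h₂ : l₂ ≠ [])
    (h : EndsAt G l₂ v) : EndsAt G (l₁ ++ l₂) v := by
  induction l₁ with
  | nil => simpa
  | cons f t ih =>
      cases hl : t ++ l₂ with
      | nil => rcases List.append_eq_nil_iff.1 hl with ⟨-, rfl⟩; exact absurd rfl h₂
      | cons g t' =>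
          show EndsAt G (f :: t ++ l₂) v
          rw [List.cons_append, hl, endsAt_cons_cons, ← hl]
          exact ih

lemma VP_append {l₁ l₂ : List G.E} {v : G.V} (h₁ : VP G l₁) (h₂ : VP G l₂)
    (he : EndsAt G l₁ v) (hs : StartsAt G l₂ v) : VP G (l₁ ++ l₂) := by
  induction l₁ with
  | nil => simpa
  | cons f t ih =>
      cases t with
      | nil =>
          cases l₂ with
          | nil => simpa
          | cons g t' =>
              refine (VP_cons_cons G).2 ⟨?_, h₂⟩
              rw [(endsAt_singleton G).1 he]; exact hs.symm
      | cons g t' =>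
          refine (VP_cons_cons G).2 ⟨((VP_cons_cons G).1 h₁).1, ?_⟩
          exact ih ((VP_cons_cons G).1 h₁).2 he

lemma VP_append_left {l₁ l₂ : List G.E} (h : VP G (l₁ ++ l₂)) : VP G l₁ := by
  induction l₁ with
  | nil => trivial
  | cons f t ih =>
      cases t with
      | nil => trivial
      | cons g t' =>
          have h' : VP G (f :: g :: (t' ++ l₂)) := h
          exact (VP_cons_cons G).2 ⟨((VP_cons_cons G).1 h').1,
            ih ((VP_cons_cons G).1 h').2⟩

lemma VP_append_right {l₁ l₂ : List G.E} (h : VP G (l₁ ++ l₂)) : VP G l₂ := by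
  induction l₁ with
  | nil => exact h
  | cons f t ih => exact ih (VP_tail G h)

lemma VP_append_link {l₁ : List G.E} {f : G.E} {t : List G.E}
    (h : VP G (l₁ ++ f :: t)) : EndsAt G l₁ (G.s f) := by
  induction l₁ with
  | nil => trivial
  | cons g t₁ ih =>
      cases t₁ with
      | nil => exact ((VP_cons_cons G).1 h).1
      | cons g' t₁' => exact ih (VP_tail G h)

/-- heredity along a path: if the range of the first edge is in a hereditary set,
so is the end vertex. -/
lemma her_path {H : Set G.V} (hH : G.Hereditary H) :
    ∀ (t : List G.E) (f : G.E), VP G (f :: t) → G.r f ∈ H →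
      ∀ {w : G.V}, EndsAt G (f :: t) w → w ∈ H := by
  intro t
  induction t with
  | nil => intro f _ hf w hw; exact ((endsAt_singleton G).1 hw) ▸ hf
  | cons g t' ih =>
      intro f hvp hf w hw
      have h1 : G.r f = G.s g := ((VP_cons_cons G).1 hvp).1
      exact ih g ((VP_cons_cons G).1 hvp).2 (hH g (h1 ▸ hf)) hw

/-! ### Multiplication lemmas for list monomials -/

lemma mul4 {A : Type*} [Semiring A] {a b c d e : A} (h : b * c = e) :
    (a * b) * (c * d) = a * (e * d) := by
  rw [mul_assoc, ← mul_assoc b, h]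

lemma Xv_mul_listE_cons {v : G.V} {f : G.E} (t : List G.E) (h : G.s f = v) :
    Xv R G v * listE R G (f :: t) = listE R G (f :: t) := by
  rw [listE_cons, ← mul_assoc, ← h, Xv_mul_Xe]

lemma Xv_mul_listE_cons_zero {v : G.V} {f : G.E} (t : List G.E) (h : G.s f ≠ v) :
    Xv R G v * listE R G (f :: t) = 0 := by
  rw [listE_cons, ← mul_assoc, Xv_mul_Xe' R G v f h, zero_mul]

lemma listG_cons_mul_Xv {v : G.V} {f : G.E} (t : List G.E) (h : G.s f = v) :
    listG R G (f :: t) * Xv R G v = listG R G (f :: t) := by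
  rw [listG_cons, mul_assoc, ← h, Xg_mul_Xv]

lemma listG_cons_mul_Xv_zero {v : G.V} {f : G.E} (t : List G.E) (h : G.s f ≠ v) :
    listG R G (f :: t) * Xv R G v = 0 := by
  rw [listG_cons, mul_assoc, Xg_mul_Xv' R G v f h, mul_zero]

lemma listE_mul_Xv {v : G.V} : ∀ {l : List G.E}, l ≠ [] → EndsAt G l v →
    listE R G l * Xv R G v = listE R G l := by
  intro l
  induction l with
  | nil => intro h; exact absurd rfl h
  | cons f t ih =>
      intro _ he
      cases t with
      | nil =>
          simp only [listE_cons, listE_nil, mul_one, mul_assoc]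
          rw [← (endsAt_singleton G).1 he, Xe_mul_Xv]
      | cons g t' =>
          rw [listE_cons, mul_assoc, ih (by simp) he, ← listE_cons]

lemma Xv_mul_listG {v : G.V} : ∀ {l : List G.E}, l ≠ [] → EndsAt G l v →
    Xv R G v * listG R G l = listG R G l := by
  intro l
  induction l with
  | nil => intro h; exact absurd rfl h
  | cons f t ih =>
      intro _ he
      cases t with
      | nil =>
          simp only [listG_cons, listG_nil, one_mul]
          rw [← (endsAt_singleton G).1 he, Xv_mul_Xg]
      | cons g t' =>
          rw [listG_cons, ← mul_assoc, ih (by simp) he, ← listG_cons]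

lemma listG_mul_listE_self {v : G.V} : ∀ {l : List G.E}, l ≠ [] → VP G l →
    EndsAt G l v → listG R G l * listE R G l = Xv R G v := by
  intro l
  induction l with
  | nil => intro h; exact absurd rfl h
  | cons f t ih =>
      intro _ hvp he
      rw [listG_cons, listE_cons, mul4 (Xg_mul_Xe_same R G f)]
      cases t with
      | nil =>
          simp only [listG_nil, listE_nil, mul_one, one_mul]
          rw [(endsAt_singleton G).1 he]
      | cons g t' =>
          rw [Xv_mul_listE_cons R G t' ((VP_cons_cons G).1 hvp).1.symm]
          exact ih (by simp) ((VP_cons_cons G).1 hvp).2 he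

lemma listG_mul_listE_zero : ∀ {l₁ l₂ : List G.E}, VP G l₁ → VP G l₂ →
    ¬ (l₁ <+: l₂) → ¬ (l₂ <+: l₁) → listG R G l₁ * listE R G l₂ = 0 := by
  intro l₁
  induction l₁ with
  | nil => intro l₂ _ _ h1 _; exact absurd (List.nil_prefix) h1
  | cons e t₁ ih =>
      intro l₂ hv1 hv2 h1 h2
      cases l₂ with
      | nil => exact absurd (List.nil_prefix) h2
      | cons f t₂ =>
          by_cases hef : e = f
          · subst hef
            rw [listG_cons, listE_cons, mul4 (Xg_mul_Xe_same R G e)]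
            cases t₂ with
            | nil => exact absurd (by simpa using List.nil_prefix) h2
            | cons g t₂' =>
                rw [Xv_mul_listE_cons R G t₂' ((VP_cons_cons G).1 hv2).1.symm]
                refine ih (VP_tail G hv1) (VP_tail G hv2) ?_ ?_
                · exact fun hp => h1 (by simpa [List.cons_prefix_cons] using hp)
                · exact fun hp => h2 (by simpa [List.cons_prefix_cons] using hp)
          · rw [listG_cons, listE_cons, mul4 (Xg_mul_Xe_diff R G e f hef)]
            simp

lemma listG_mul_listE_prefix {l κ : List G.E} {v : G.V} (hl : l ≠ [])
    (hvp : VP G (l ++ κ)) (he : EndsAt G l v) :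
    listG R G l * listE R G (l ++ κ) = Xv R G v * listE R G κ := by
  rw [listE_append, ← mul_assoc,
    listG_mul_listE_self R G hl (VP_append_left G hvp) he]

end LPAproof
namespace LPAproof
variable (R : Type) [CommRing R] (G : LPGraph)

/-! ### The elements `v^H` -/

def edgeSet (H : Set G.V) (v : G.V) : Set G.E := {e : G.E | G.s e = v ∧ G.r e ∉ H}

lemma vH_eq {H : Set G.V} {v : G.V} (hfin : (edgeSet G H v).Finite) :
    vH R G H v = Xv R G v - ∑ e ∈ hfin.toFinset, Xe R G e * Xg R G e := by
  unfold vH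
  congr 1
  exact finsum_cond_eq_sum_of_cond_iff _
    (fun {x} _ => by simp [edgeSet, Set.Finite.mem_toFinset])

variable {H : Set G.V} {v : G.V}

lemma mem_edgeSet_toFinset {e : G.E} (hfin : (edgeSet G H v).Finite) :
    e ∈ hfin.toFinset ↔ G.s e = v ∧ G.r e ∉ H := by
  simp [edgeSet, Set.Finite.mem_toFinset]

lemma vH_mul_Xv_self (hfin : (edgeSet G H v).Finite) :
    vH R G H v * Xv R G v = vH R G H v := by
  rw [vH_eq R G hfin, sub_mul, Xv_mul_self]
  congr 1
  rw [Finset.sum_mul]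
  refine Finset.sum_congr rfl fun e he => ?_
  obtain ⟨hs, -⟩ := (mem_edgeSet_toFinset G hfin).1 he
  rw [mul_assoc, ← hs, Xg_mul_Xv]

lemma Xv_mul_vH_self (hfin : (edgeSet G H v).Finite) :
    Xv R G v * vH R G H v = vH R G H v := by
  rw [vH_eq R G hfin, mul_sub, Xv_mul_self]
  congr 1
  rw [Finset.mul_sum]
  refine Finset.sum_congr rfl fun e he => ?_
  obtain ⟨hs, -⟩ := (mem_edgeSet_toFinset G hfin).1 he
  rw [← mul_assoc, ← hs, Xv_mul_Xe]

lemma vH_mul_Xv_ne {w : G.V} (hfin : (edgeSet G H v).Finite) (hw : w ≠ v) :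
    vH R G H v * Xv R G w = 0 := by
  rw [vH_eq R G hfin, sub_mul, Xv_mul_Xv R G v w (Ne.symm hw), Finset.sum_mul]
  rw [Finset.sum_eq_zero, sub_zero]
  intro e he
  obtain ⟨hs, -⟩ := (mem_edgeSet_toFinset G hfin).1 he
  rw [mul_assoc, Xg_mul_Xv' R G w e (by rw [hs]; exact Ne.symm hw), mul_zero]

lemma Xv_mul_vH_ne {w : G.V} (hfin : (edgeSet G H v).Finite) (hw : w ≠ v) :
    Xv R G w * vH R G H v = 0 := by
  rw [vH_eq R G hfin, mul_sub, Xv_mul_Xv R G w v hw, Finset.mul_sum]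
  rw [Finset.sum_eq_zero, sub_zero]
  intro e he
  obtain ⟨hs, -⟩ := (mem_edgeSet_toFinset G hfin).1 he
  rw [← mul_assoc, Xv_mul_Xe' R G w e (by rw [hs]; exact Ne.symm hw), zero_mul]

lemma vH_mul_Xe_mem (hfin : (edgeSet G H v).Finite) {f : G.E}
    (hs : G.s f = v) (hr : G.r f ∈ H) :
    vH R G H v * Xe R G f = Xe R G f := by
  rw [vH_eq R G hfin, sub_mul, Xv_mul_Xe_of R G hs, Finset.sum_mul]
  rw [Finset.sum_eq_zero, sub_zero]
  intro e he
  obtain ⟨-, hre⟩ := (mem_edgeSet_toFinset G hfin).1 he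
  have hef : e ≠ f := fun h => hre (h ▸ hr)
  rw [mul_assoc, Xg_mul_Xe_diff R G e f hef, mul_zero]

lemma vH_mul_Xe_not_mem (hfin : (edgeSet G H v).Finite) {f : G.E}
    (hs : G.s f = v) (hr : G.r f ∉ H) :
    vH R G H v * Xe R G f = 0 := by
  rw [vH_eq R G hfin, sub_mul, Xv_mul_Xe_of R G hs, Finset.sum_mul]
  rw [Finset.sum_eq_single_of_mem f (by rw [mem_edgeSet_toFinset]; exact ⟨hs, hr⟩)]
  · rw [mul_assoc, Xg_mul_Xe_same, Xe_mul_Xv_of R G (rfl : G.r f = G.r f), sub_self]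
  · intro e _ hef
    rw [mul_assoc, Xg_mul_Xe_diff R G e f hef, mul_zero]

lemma vH_mul_Xe_ne (hfin : (edgeSet G H v).Finite) {f : G.E} (hs : G.s f ≠ v) :
    vH R G H v * Xe R G f = 0 := by
  rw [vH_eq R G hfin, sub_mul, Xv_mul_Xe' R G v f hs, Finset.sum_mul, zero_sub,
    Finset.sum_eq_zero, neg_zero]
  intro e he
  obtain ⟨hse, -⟩ := (mem_edgeSet_toFinset G hfin).1 he
  have hef : e ≠ f := fun h => hs (h ▸ hse)
  rw [mul_assoc, Xg_mul_Xe_diff R G e f hef, mul_zero]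

lemma Xg_mul_vH_mem (hfin : (edgeSet G H v).Finite) {f : G.E}
    (hs : G.s f = v) (hr : G.r f ∈ H) :
    Xg R G f * vH R G H v = Xg R G f := by
  rw [vH_eq R G hfin, mul_sub, Xg_mul_Xv_of R G hs, Finset.mul_sum]
  rw [Finset.sum_eq_zero, sub_zero]
  intro e he
  obtain ⟨-, hre⟩ := (mem_edgeSet_toFinset G hfin).1 he
  have hef : f ≠ e := fun h => hre (h ▸ hr)
  rw [← mul_assoc, Xg_mul_Xe_diff R G f e hef, zero_mul]

lemma Xg_mul_vH_not_mem (hfin : (edgeSet G H v).Finite) {f : G.E}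
    (hs : G.s f = v) (hr : G.r f ∉ H) :
    Xg R G f * vH R G H v = 0 := by
  rw [vH_eq R G hfin, mul_sub, Xg_mul_Xv_of R G hs, Finset.mul_sum]
  rw [Finset.sum_eq_single_of_mem f (by rw [mem_edgeSet_toFinset]; exact ⟨hs, hr⟩)]
  · rw [← mul_assoc, Xg_mul_Xe_same, Xv_mul_Xg, sub_self]

  · intro e _ hef
    rw [← mul_assoc, Xg_mul_Xe_diff R G f e (Ne.symm hef), zero_mul]

lemma Xg_mul_vH_ne (hfin : (edgeSet G H v).Finite) {f : G.E} (hs : G.s f ≠ v) :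
    Xg R G f * vH R G H v = 0 := by
  rw [vH_eq R G hfin, mul_sub, Xg_mul_Xv' R G v f hs, Finset.mul_sum, zero_sub,
    Finset.sum_eq_zero, neg_zero]
  intro e he
  obtain ⟨hse, -⟩ := (mem_edgeSet_toFinset G hfin).1 he
  have hef : f ≠ e := fun h => hs (h ▸ hse.symm ▸ hse)
  rw [← mul_assoc, Xg_mul_Xe_diff R G f e hef, zero_mul]

lemma vH_congr {A B : Set G.V} (h : edgeSet G A v = edgeSet G B v)
    (hfin : (edgeSet G A v).Finite) : vH R G A v = vH R G B v := by
  rw [vH_eq R G hfin, vH_eq R G (h ▸ hfin)]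
  congr 1
  refine Finset.sum_congr ?_ (fun _ _ => rfl)
  ext e
  rw [mem_edgeSet_toFinset, mem_edgeSet_toFinset]
  constructor
  · intro he
    have h2 : e ∈ edgeSet G A v := he
    rw [h] at h2
    exact h2
  · intro he
    have h2 : e ∈ edgeSet G B v := he
    rw [← h] at h2
    exact h2

lemma vH_mul_vH {A B : Set G.V} (hfA : (edgeSet G A v).Finite)
    (hfB : (edgeSet G B v).Finite) :
    vH R G A v * vH R G B v = vH R G (A ∩ B) v := by
  classical
  have hunion : edgeSet G (A ∩ B) v = edgeSet G A v ∪ edgeSet G B v := by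
    ext e; simp only [edgeSet, Set.mem_setOf_eq, Set.mem_union, Set.mem_inter_iff]; tauto
  have hfAB : (edgeSet G (A ∩ B) v).Finite := hunion ▸ hfA.union hfB
  set sA := hfA.toFinset
  set sB := hfB.toFinset
  have hABfinset : hfAB.toFinset = sA ∪ sB := by
    ext e
    simp only [mem_edgeSet_toFinset, Finset.mem_union, sA, sB, Set.Finite.mem_toFinset]
    simp only [edgeSet, Set.mem_setOf_eq, Set.mem_inter_iff]
    tauto
  rw [vH_eq R G hfA, vH_eq R G hfB, vH_eq R G hfAB, hABfinset]
  have hcross : (∑ e ∈ sA, Xe R G e * Xg R G e) * (∑ e ∈ sB, Xe R G e * Xg R G e)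
      = ∑ e ∈ sA ∩ sB, Xe R G e * Xg R G e := by
    rw [Finset.sum_mul_sum, ← Finset.sum_ite_mem]
    refine Finset.sum_congr rfl fun e heA => ?_
    by_cases heB : e ∈ sB
    · rw [if_pos heB]
      rw [Finset.sum_eq_single_of_mem e heB (fun f _ hfe => by
        rw [mul4 (Xg_mul_Xe_diff R G e f (Ne.symm hfe))]; simp)]
      rw [mul4 (Xg_mul_Xe_same R G e), Xv_mul_Xg]
    · rw [if_neg heB, Finset.sum_eq_zero]
      intro f hf
      have hfe : e ≠ f := fun h => heB (h ▸ hf)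
      rw [mul4 (Xg_mul_Xe_diff R G e f hfe)]; simp
  have hXB : Xv R G v * (∑ e ∈ sB, Xe R G e * Xg R G e)
      = ∑ e ∈ sB, Xe R G e * Xg R G e := by
    rw [Finset.mul_sum]
    refine Finset.sum_congr rfl fun e he => ?_
    obtain ⟨hse, -⟩ := hfB.mem_toFinset.1 he
    rw [← mul_assoc, Xv_mul_Xe_of R G hse]
  have hAX : (∑ e ∈ sA, Xe R G e * Xg R G e) * Xv R G v
      = ∑ e ∈ sA, Xe R G e * Xg R G e := by
    rw [Finset.sum_mul]
    refine Finset.sum_congr rfl fun e he => ?_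
    obtain ⟨hse, -⟩ := hfA.mem_toFinset.1 he
    rw [mul_assoc, Xg_mul_Xv_of R G hse]
  rw [sub_mul, mul_sub, mul_sub, Xv_mul_self, hXB, hAX, hcross]
  have hui := Finset.sum_union_inter (s₁ := sA) (s₂ := sB)
    (f := fun e => Xe R G e * Xg R G e)
  have hEq : ∑ e ∈ sA ∪ sB, Xe R G e * Xg R G e
      = (∑ e ∈ sA, Xe R G e * Xg R G e) + (∑ e ∈ sB, Xe R G e * Xg R G e)
        - ∑ e ∈ sA ∩ sB, Xe R G e * Xg R G e := by
    rw [← hui]; abel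
  rw [hEq]; abel

end LPAproof
namespace LPAproof
variable (R : Type) [CommRing R] (G : LPGraph)

/-! ### Generator idempotents and the spanning set -/

def IsGenP (H S : Set G.V) (v : G.V) (p : LPA R G) : Prop :=
  (v ∈ H ∧ p = Xv R G v) ∨
    (v ∈ S ∧ v ∉ H ∧ (edgeSet G H v).Finite ∧ p = vH R G H v)

variable {H S : Set G.V}

lemma isGenP_unique {v : G.V} {p q : LPA R G} (hp : IsGenP R G H S v p)
    (hq : IsGenP R G H S v q) : p = q := by
  rcases hp with ⟨hv, rfl⟩ | ⟨-, hv, -, rfl⟩ <;>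
    rcases hq with ⟨hv', rfl⟩ | ⟨-, hv', -, rfl⟩
  · rfl
  · exact absurd hv hv'
  · exact absurd hv' hv
  · rfl

lemma genP_mul_Xv_self {v : G.V} {p : LPA R G} (hp : IsGenP R G H S v p) :
    p * Xv R G v = p := by
  rcases hp with ⟨-, rfl⟩ | ⟨-, -, hfin, rfl⟩
  · exact Xv_mul_self R G v
  · exact vH_mul_Xv_self R G hfin

lemma Xv_mul_genP_self {v : G.V} {p : LPA R G} (hp : IsGenP R G H S v p) :
    Xv R G v * p = p := by
  rcases hp with ⟨-, rfl⟩ | ⟨-, -, hfin, rfl⟩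
  · exact Xv_mul_self R G v
  · exact Xv_mul_vH_self R G hfin

lemma genP_mul_Xv_ne {v w : G.V} {p : LPA R G} (hp : IsGenP R G H S v p)
    (hw : w ≠ v) : p * Xv R G w = 0 := by
  rcases hp with ⟨-, rfl⟩ | ⟨-, -, hfin, rfl⟩
  · exact Xv_mul_Xv R G v w (Ne.symm hw)
  · exact vH_mul_Xv_ne R G hfin hw

lemma Xv_mul_genP_ne {v w : G.V} {p : LPA R G} (hp : IsGenP R G H S v p)
    (hw : w ≠ v) : Xv R G w * p = 0 := by
  rcases hp with ⟨-, rfl⟩ | ⟨-, -, hfin, rfl⟩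
  · exact Xv_mul_Xv R G w v hw
  · exact Xv_mul_vH_ne R G hfin hw

lemma genP_idem {v : G.V} {p : LPA R G} (hp : IsGenP R G H S v p) :
    p * p = p := by
  rcases hp with ⟨-, rfl⟩ | ⟨-, -, hfin, rfl⟩
  · exact Xv_mul_self R G v
  · rw [vH_mul_vH R G hfin hfin]
    congr 1
    exact Set.inter_self H

lemma lpaStar_genP {v : G.V} {p : LPA R G} (hp : IsGenP R G H S v p) :
    lpaStar R G p = p := by
  rcases hp with ⟨-, rfl⟩ | ⟨-, -, hfin, rfl⟩
  · exact lpaStar_Xv R G v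
  · rw [vH_eq R G hfin, lpaStar_sub, lpaStar_Xv, lpaStar_sum]
    congr 1
    refine Finset.sum_congr rfl fun e _ => ?_
    rw [lpaStar_mul, lpaStar_Xe, lpaStar_Xg]

lemma Xe_mul_Xe_zero {f g : G.E} (h : G.r f ≠ G.s g) :
    Xe R G f * Xe R G g = 0 := by
  rw [← Xe_mul_Xv R G f, mul_assoc, Xv_mul_Xe' R G (G.r f) g (Ne.symm h), mul_zero]

def SpanSet (H S : Set G.V) : Set (LPA R G) :=
  {x | ∃ (v : G.V) (p : LPA R G) (l l' : List G.E), IsGenP R G H S v p ∧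
    VP G l ∧ EndsAt G l v ∧ VP G l' ∧ EndsAt G l' v ∧
    x = listE R G l * p * listG R G l'}

lemma genP_mem_spanSet {v : G.V} {p : LPA R G} (hp : IsGenP R G H S v p) :
    p ∈ SpanSet R G H S :=
  ⟨v, p, [], [], hp, trivial, trivial, trivial, trivial, by simp⟩

lemma lpaStar_spanSet {m : LPA R G} (hm : m ∈ SpanSet R G H S) :
    lpaStar R G m ∈ SpanSet R G H S := by
  obtain ⟨v, p, l, l', hp, hl, he, hl', he', rfl⟩ := hm
  refine ⟨v, p, l', l, hp, hl', he', hl, he, ?_⟩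
  rw [lpaStar_mul, lpaStar_mul, lpaStar_listG, lpaStar_listE, lpaStar_genP R G hp,
    mul_assoc]

/-! ### closure of the span of `SpanSet` under multiplication -/

lemma Xv_mul_spanSet (hH : G.Hereditary H) (w : G.V) {m : LPA R G}
    (hm : m ∈ SpanSet R G H S) :
    Xv R G w * m ∈ Submodule.span R (SpanSet R G H S) := by
  obtain ⟨v, p, l, l', hp, hl, he, hl', he', rfl⟩ := hm
  cases l with
  | nil =>
      simp only [listE_nil, one_mul, ← mul_assoc]
      by_cases hw : w = v
      · subst hw
        rw [Xv_mul_genP_self R G hp]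
        exact Submodule.subset_span ⟨w, p, [], l', hp, trivial, trivial, hl', he', by simp⟩
      · rw [Xv_mul_genP_ne R G hp hw, zero_mul]
        exact Submodule.zero_mem _
  | cons f t =>
      simp only [listE_cons, ← mul_assoc]
      by_cases hw : G.s f = w
      · rw [Xv_mul_Xe_of R G hw]
        exact Submodule.subset_span ⟨v, p, f :: t, l', hp, hl, he, hl', he',
          by simp only [listE_cons, ← mul_assoc]⟩
      · rw [Xv_mul_Xe' R G w f hw]
        simp only [zero_mul]
        exact Submodule.zero_mem _

lemma Xe_mul_spanSet (hH : G.Hereditary H) (f : G.E) {m : LPA R G}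
    (hm : m ∈ SpanSet R G H S) :
    Xe R G f * m ∈ Submodule.span R (SpanSet R G H S) := by
  obtain ⟨v, p, l, l', hp, hl, he, hl', he', rfl⟩ := hm
  cases l with
  | nil =>
      simp only [listE_nil, one_mul, ← mul_assoc]
      by_cases hr : G.r f = v
      · exact Submodule.subset_span ⟨v, p, [f], l', hp, trivial, hr, hl', he',
          by simp only [listE_cons, listE_nil, mul_one, ← mul_assoc]⟩
      · rw [← Xv_mul_genP_self R G hp, ← mul_assoc, Xe_mul_Xv' R G v f hr]
        simp only [zero_mul]
        exact Submodule.zero_mem _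
  | cons g t =>
      simp only [listE_cons, ← mul_assoc]
      by_cases hr : G.r f = G.s g
      · exact Submodule.subset_span ⟨v, p, f :: g :: t, l', hp, ⟨hr, hl⟩, he, hl', he',
          by simp only [listE_cons, ← mul_assoc]⟩
      · rw [Xe_mul_Xe_zero R G hr]
        simp only [zero_mul]
        exact Submodule.zero_mem _

lemma Xg_mul_spanSet (hH : G.Hereditary H) (f : G.E) {m : LPA R G}
    (hm : m ∈ SpanSet R G H S) :
    Xg R G f * m ∈ Submodule.span R (SpanSet R G H S) := by
  obtain ⟨v, p, l, l', hp, hl, he, hl', he', rfl⟩ := hm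
  cases l with
  | cons e t =>
      simp only [listE_cons, ← mul_assoc]
      by_cases hf : f = e
      · subst hf
        rw [Xg_mul_Xe_same]
        cases t with
        | nil =>
            simp only [listE_nil, mul_one]
            have hp' : IsGenP R G H S (G.r f) p := by
              rw [(endsAt_singleton G).1 he]; exact hp
            rw [Xv_mul_genP_self R G hp']
            exact Submodule.subset_span ⟨v, p, [], l', hp, trivial, trivial, hl', he',
              by simp⟩
        | cons g t' =>
            simp only [listE_cons, ← mul_assoc]
            rw [Xv_mul_Xe_of R G ((VP_cons_cons G).1 hl).1.symm]
            exact Submodule.subset_span ⟨v, p, g :: t', l', hp, VP_tail G hl,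
              he, hl', he', by simp only [listE_cons, ← mul_assoc]⟩
      · rw [Xg_mul_Xe_diff R G f e hf]
        simp only [zero_mul]
        exact Submodule.zero_mem _
  | nil =>
      simp only [listE_nil, one_mul, ← mul_assoc]
      by_cases hsf : G.s f = v
      · have hvp' : VP G (l' ++ [f]) :=
          VP_append G hl' (VP_singleton G f) he' hsf
        have hee' : EndsAt G (l' ++ [f]) (G.r f) :=
          endsAt_append G (by simp) ((endsAt_singleton G).2 rfl)
        have heq : Xg R G f * listG R G l'
            = listE R G [] * Xv R G (G.r f) * listG R G (l' ++ [f]) := by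
          rw [listE_nil, one_mul, listG_append, listG_cons, listG_nil, one_mul,
            ← mul_assoc, Xv_mul_Xg_of R G rfl]
        rcases hp with ⟨hv, rfl⟩ | ⟨hv, hvnot, hfin, rfl⟩
        · have hrf : G.r f ∈ H := hH f (hsf.symm ▸ hv)
          rw [Xg_mul_Xv_of R G hsf, heq]
          exact Submodule.subset_span ⟨G.r f, Xv R G (G.r f), [], l' ++ [f],
            Or.inl ⟨hrf, rfl⟩, trivial, trivial, hvp', hee', rfl⟩
        · by_cases hrf : G.r f ∈ H
          · rw [Xg_mul_vH_mem R G hfin hsf hrf, heq]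
            exact Submodule.subset_span ⟨G.r f, Xv R G (G.r f), [], l' ++ [f],
              Or.inl ⟨hrf, rfl⟩, trivial, trivial, hvp', hee', rfl⟩
          · rw [Xg_mul_vH_not_mem R G hfin hsf hrf, zero_mul]
            exact Submodule.zero_mem _
      · rcases hp with ⟨hv, rfl⟩ | ⟨hv, hvnot, hfin, rfl⟩
        · rw [Xg_mul_Xv' R G v f hsf, zero_mul]
          exact Submodule.zero_mem _
        · rw [Xg_mul_vH_ne R G hfin hsf, zero_mul]
          exact Submodule.zero_mem _

lemma mul_mem_span_spanSet (hH : G.Hereditary H) (a : LPA R G) {x : LPA R G}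
    (hx : x ∈ Submodule.span R (SpanSet R G H S)) :
    a * x ∈ Submodule.span R (SpanSet R G H S) := by
  -- first reduce to m ∈ SpanSet
  have key : ∀ (a : LPA R G), (∀ m ∈ SpanSet R G H S,
      a * m ∈ Submodule.span R (SpanSet R G H S)) →
      ∀ y ∈ Submodule.span R (SpanSet R G H S),
        a * y ∈ Submodule.span R (SpanSet R G H S) := by
    intro a ha y hy
    induction hy using Submodule.span_induction with
    | mem z hz => exact ha z hz
    | zero => rw [mul_zero]; exact Submodule.zero_mem _
    | add y z _ _ hy hz => rw [mul_add]; exact Submodule.add_mem _ hy hz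
    | smul r y _ hy => rw [mul_smul_comm]; exact Submodule.smul_mem _ r hy
  -- now prove the generator property for every a by induction
  suffices hgen : ∀ m ∈ SpanSet R G H S, a * m ∈ Submodule.span R (SpanSet R G H S) by
    exact key a hgen _ hx
  obtain ⟨y, rfl⟩ := RingQuot.mkAlgHom_surjective R (LRel R G) a
  induction y using FreeAlgebra.induction with
  | grade0 r =>
      intro m hm
      rw [AlgHom.commutes, ← Algebra.smul_def]
      exact Submodule.smul_mem _ r (Submodule.subset_span hm)
  | grade1 i =>
      cases i with
      | vertex w => exact fun m hm => Xv_mul_spanSet R G hH w hm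
      | edge f => exact fun m hm => Xe_mul_spanSet R G hH f hm
      | ghost f => exact fun m hm => Xg_mul_spanSet R G hH f hm
  | mul a b ha hb =>
      intro m hm
      rw [map_mul, mul_assoc]
      exact key _ ha _ (hb m hm)
  | add a b ha hb =>
      intro m hm
      rw [map_add, add_mul]
      exact Submodule.add_mem _ (ha m hm) (hb m hm)

lemma lpaStar_mem_span_spanSet {x : LPA R G}
    (hx : x ∈ Submodule.span R (SpanSet R G H S)) :
    lpaStar R G x ∈ Submodule.span R (SpanSet R G H S) := by
  induction hx using Submodule.span_induction with
  | mem z hz => exact Submodule.subset_span (lpaStar_spanSet R G hz)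
  | zero => rw [lpaStar_zero]; exact Submodule.zero_mem _
  | add y z _ _ hy hz => rw [lpaStar_add]; exact Submodule.add_mem _ hy hz
  | smul r y _ hy => rw [lpaStar_smul]; exact Submodule.smul_mem _ r hy

lemma span_mul_mem_spanSet (hH : G.Hereditary H) (a : LPA R G) {x : LPA R G}
    (hx : x ∈ Submodule.span R (SpanSet R G H S)) :
    x * a ∈ Submodule.span R (SpanSet R G H S) := by
  have : x * a = lpaStar R G (lpaStar R G a * lpaStar R G x) := by
    rw [lpaStar_mul, lpaStar_lpaStar, lpaStar_lpaStar]
  rw [this]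
  exact lpaStar_mem_span_spanSet R G
    (mul_mem_span_spanSet R G hH _ (lpaStar_mem_span_spanSet R G hx))

/-! ### `I(H,S)` equals the span of `SpanSet` -/

lemma spanSet_subset_IHS {m : LPA R G} (hm : m ∈ SpanSet R G H S) :
    m ∈ IHS R G H S := by
  obtain ⟨v, p, l, l', hp, -, -, -, -, rfl⟩ := hm
  have hgen : p ∈ IHS R G H S := by
    rcases hp with ⟨hv, rfl⟩ | ⟨hv, -, -, rfl⟩
    · exact TwoSidedIdeal.subset_span (Set.mem_union_left _ ⟨v, hv, rfl⟩)
    · exact TwoSidedIdeal.subset_span (Set.mem_union_right _ ⟨v, hv, rfl⟩)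
  exact TwoSidedIdeal.mul_mem_right _ _ _
    (TwoSidedIdeal.mul_mem_left _ _ _ hgen)

lemma mem_IHS_iff_mem_span (hH : G.Hereditary H) (hSB : S ⊆ G.BH H)
    {x : LPA R G} :
    x ∈ IHS R G H S ↔ x ∈ Submodule.span R (SpanSet R G H S) := by
  constructor
  · intro hx
    let J : TwoSidedIdeal (LPA R G) := TwoSidedIdeal.mk'
      (Submodule.span R (SpanSet R G H S) : Set (LPA R G))
      (Submodule.zero_mem _)
      (fun ha hb => Submodule.add_mem _ ha hb)
      (fun ha => Submodule.neg_mem _ ha)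
      (fun hb => mul_mem_span_spanSet R G hH _ hb)
      (fun ha => span_mul_mem_spanSet R G hH _ ha)
    have hJ : ∀ z : LPA R G, z ∈ J ↔ z ∈ Submodule.span R (SpanSet R G H S) :=
      fun z => TwoSidedIdeal.mem_mk' _ _ _ _ _ _ z
    have hgen : ((fun v => Xv R G v) '' H ∪ (fun v => vH R G H v) '' S) ⊆ J := by
      rintro z (⟨v, hv, rfl⟩ | ⟨v, hv, rfl⟩)
      · exact (hJ _).2 <| Submodule.subset_span <| genP_mem_spanSet R G (Or.inl ⟨hv, rfl⟩)
      · refine (hJ _).2 <| Submodule.subset_span <| genP_mem_spanSet R G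
          (Or.inr ⟨hv, (hSB hv).1, (hSB hv).2.2.1, rfl⟩)
    exact (hJ x).1 (TwoSidedIdeal.mem_span_iff.1 hx J hgen)
  · intro hx
    induction hx using Submodule.span_induction with
    | mem z hz => exact spanSet_subset_IHS R G hz
    | zero => exact TwoSidedIdeal.zero_mem _
    | add y z _ _ hy hz => exact TwoSidedIdeal.add_mem _ hy hz
    | smul r y _ hy =>
        rw [Algebra.smul_def]
        exact TwoSidedIdeal.mul_mem_left _ _ _ hy

end LPAproof
namespace LPAproof
variable (R : Type) [CommRing R] (G : LPGraph)

/-! ### Products of spanning monomials for two admissible pairs -/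

variable {H₁ S₁ H₂ S₂ : Set G.V}

lemma her_inter (hA : G.Hereditary H₁) (hB : G.Hereditary H₂) :
    G.Hereditary (H₁ ∩ H₂) := fun e he => ⟨hA e he.1, hB e he.2⟩

lemma genP_mul_Xe_ne {v : G.V} {p : LPA R G} {f : G.E}
    (hp : IsGenP R G H₁ S₁ v p) (hs : G.s f ≠ v) : p * Xe R G f = 0 := by
  rcases hp with ⟨-, rfl⟩ | ⟨-, -, hfin, rfl⟩
  · exact Xv_mul_Xe' R G v f hs
  · exact vH_mul_Xe_ne R G hfin hs

lemma Xg_mul_genP_ne {v : G.V} {p : LPA R G} {f : G.E}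
    (hp : IsGenP R G H₁ S₁ v p) (hs : G.s f ≠ v) : Xg R G f * p = 0 := by
  rcases hp with ⟨-, rfl⟩ | ⟨-, -, hfin, rfl⟩
  · exact Xg_mul_Xv' R G v f hs
  · exact Xg_mul_vH_ne R G hfin hs

lemma genP_mul_genP_ne {v w : G.V} {p q : LPA R G}
    (hp : IsGenP R G H₁ S₁ v p) (hq : IsGenP R G H₂ S₂ w q) (hvw : v ≠ w) :
    p * q = 0 := by
  rw [← Xv_mul_genP_self R G hq, ← mul_assoc, genP_mul_Xv_ne R G hp (Ne.symm hvw),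
    zero_mul]

lemma edgeSet_inter_of_her_left {v : G.V} (hH : G.Hereditary H₁) (hv : v ∈ H₁) :
    edgeSet G (H₁ ∩ H₂) v = edgeSet G H₂ v := by
  ext e
  simp only [edgeSet, Set.mem_setOf_eq, Set.mem_inter_iff]
  constructor
  · rintro ⟨hs, hr⟩
    refine ⟨hs, fun h2 => hr ⟨?_, h2⟩⟩
    exact hH e (by rw [hs]; exact hv)
  · rintro ⟨hs, hr⟩
    exact ⟨hs, fun h => hr h.2⟩

lemma edgeSet_inter_of_her_right {v : G.V} (hH : G.Hereditary H₂) (hv : v ∈ H₂) :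
    edgeSet G (H₁ ∩ H₂) v = edgeSet G H₁ v := by
  have h1 : edgeSet G (H₁ ∩ H₂) v = edgeSet G (H₂ ∩ H₁) v := by
    rw [Set.inter_comm]
  rw [h1, edgeSet_inter_of_her_left G hH hv]

lemma edgeSet_inter_union {v : G.V} :
    edgeSet G (H₁ ∩ H₂) v = edgeSet G H₁ v ∪ edgeSet G H₂ v := by
  ext e
  simp only [edgeSet, Set.mem_setOf_eq, Set.mem_union, Set.mem_inter_iff]
  tauto

lemma mem_BH_of_edgeSet {A B : Set G.V} {v : G.V} (hv : v ∈ G.BH A)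
    (hnB : v ∉ B) (hset : edgeSet G B v = edgeSet G A v) : v ∈ G.BH B := by
  obtain ⟨-, hinf, hfin, hne⟩ := hv
  refine ⟨hnB, hinf, ?_, ?_⟩
  · show (edgeSet G B v).Finite
    rw [hset]; exact hfin
  · show (edgeSet G B v).Nonempty
    rw [hset]; exact hne

lemma genP_mul_genP_inter (h₁ : G.Admissible H₁ S₁) (h₂ : G.Admissible H₂ S₂)
    {v : G.V} {p q : LPA R G}
    (hp : IsGenP R G H₁ S₁ v p) (hq : IsGenP R G H₂ S₂ v q) :
    IsGenP R G (H₁ ∩ H₂) ((H₁ ∪ S₁) ∩ (H₂ ∪ S₂) ∩ G.BH (H₁ ∩ H₂)) v (p * q) := by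
  rcases hp with ⟨hv1, rfl⟩ | ⟨hS1, hn1, hf1, rfl⟩
  · rcases hq with ⟨hv2, rfl⟩ | ⟨hS2, hn2, hf2, rfl⟩
    · rw [Xv_mul_self]
      exact Or.inl ⟨⟨hv1, hv2⟩, rfl⟩
    · rw [Xv_mul_vH_self R G hf2]
      have hset : edgeSet G (H₁ ∩ H₂) v = edgeSet G H₂ v :=
        edgeSet_inter_of_her_left G h₁.1 hv1
      have hnH : v ∉ H₁ ∩ H₂ := fun h => hn2 h.2
      have hBH : v ∈ G.BH (H₁ ∩ H₂) :=
        mem_BH_of_edgeSet G (h₂.2.2 hS2) hnH hset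
      refine Or.inr ⟨⟨⟨Or.inl hv1, Or.inr hS2⟩, hBH⟩, hnH, by rw [hset]; exact hf2, ?_⟩
      exact vH_congr R G hset.symm hf2
  · rcases hq with ⟨hv2, rfl⟩ | ⟨hS2, hn2, hf2, rfl⟩
    · rw [vH_mul_Xv_self R G hf1]
      have hset : edgeSet G (H₁ ∩ H₂) v = edgeSet G H₁ v :=
        edgeSet_inter_of_her_right G h₂.1 hv2
      have hnH : v ∉ H₁ ∩ H₂ := fun h => hn1 h.1
      have hBH : v ∈ G.BH (H₁ ∩ H₂) :=
        mem_BH_of_edgeSet G (h₁.2.2 hS1) hnH hset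
      refine Or.inr ⟨⟨⟨Or.inr hS1, Or.inl hv2⟩, hBH⟩, hnH, by rw [hset]; exact hf1, ?_⟩
      exact vH_congr R G hset.symm hf1
    · rw [vH_mul_vH R G hf1 hf2]
      have hset : edgeSet G (H₁ ∩ H₂) v = edgeSet G H₁ v ∪ edgeSet G H₂ v :=
        edgeSet_inter_union G
      have hnH : v ∉ H₁ ∩ H₂ := fun h => hn1 h.1
      have hfin : (edgeSet G (H₁ ∩ H₂) v).Finite := by
        rw [hset]; exact hf1.union hf2
      have hBH : v ∈ G.BH (H₁ ∩ H₂) := by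
        refine ⟨hnH, (h₁.2.2 hS1).2.1, hfin, ?_⟩
        obtain ⟨e, he⟩ := (h₁.2.2 hS1).2.2.2
        exact ⟨e, he.1, fun h => he.2 h.1⟩
      exact Or.inr ⟨⟨⟨Or.inr hS1, Or.inr hS2⟩, hBH⟩, hnH, hfin, rfl⟩

end LPAproof
namespace LPAproof
variable (R : Type) [CommRing R] (G : LPGraph)
variable {H₁ S₁ H₂ S₂ : Set G.V}

lemma endsAt_of_append {l₁ l₂ : List G.E} {v : G.V} (h₂ : l₂ ≠ [])
    (h : EndsAt G (l₁ ++ l₂) v) : EndsAt G l₂ v := by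
  induction l₁ with
  | nil => exact h
  | cons f t ih =>
      apply ih
      cases hl : t ++ l₂ with
      | nil => rcases List.append_eq_nil_iff.1 hl with ⟨-, rfl⟩; exact absurd rfl h₂
      | cons g t' =>
          have h' : EndsAt G (f :: t ++ l₂) v := h
          rw [List.cons_append, hl, endsAt_cons_cons] at h'
          exact h'

lemma genP_inter_of_mem_left (h₁ : G.Admissible H₁ S₁) (h₂ : G.Admissible H₂ S₂)
    {w : G.V} {q : LPA R G} (hw1 : w ∈ H₁) (hq : IsGenP R G H₂ S₂ w q) :
    IsGenP R G (H₁ ∩ H₂) ((H₁ ∪ S₁) ∩ (H₂ ∪ S₂) ∩ G.BH (H₁ ∩ H₂)) w q := by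
  have := genP_mul_genP_inter R G h₁ h₂ (Or.inl ⟨hw1, rfl⟩) hq
  rwa [Xv_mul_genP_self R G hq] at this

/-- the key product computation: a spanning monomial for `(H₁,S₁)` times one for
`(H₂,S₂)` whose left path extends the ghost path of the first. -/
lemma mon_mul_mon_prefix (h₁ : G.Admissible H₁ S₁) (h₂ : G.Admissible H₂ S₂)
    {v w : G.V} {p q : LPA R G} {α β κ δ : List G.E}
    (hp : IsGenP R G H₁ S₁ v p) (hq : IsGenP R G H₂ S₂ w q)
    (hα : VP G α) (heα : EndsAt G α v) (hβ : VP G β) (heβ : EndsAt G β v)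
    (hγ : VP G (β ++ κ)) (heγ : EndsAt G (β ++ κ) w)
    (hδ : VP G δ) (heδ : EndsAt G δ w) :
    (listE R G α * p * listG R G β) * (listE R G (β ++ κ) * q * listG R G δ)
      ∈ IHS R G (H₁ ∩ H₂) ((H₁ ∪ S₁) ∩ (H₂ ∪ S₂) ∩ G.BH (H₁ ∩ H₂)) := by
  have hred : (listE R G α * p * listG R G β) * (listE R G (β ++ κ) * q * listG R G δ)
      = listE R G α * (p * listE R G κ) * q * listG R G δ := by
    by_cases hβe : β = []
    · subst hβe
      simp only [listG_nil, mul_one, List.nil_append, mul_assoc]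
    · have h1 : listG R G β * listE R G (β ++ κ) = Xv R G v * listE R G κ :=
        listG_mul_listE_prefix R G hβe hγ heβ
      have h2 : (listE R G α * p * listG R G β) * (listE R G (β ++ κ) * q * listG R G δ)
          = listE R G α * (p * (listG R G β * listE R G (β ++ κ))) * q * listG R G δ := by
        simp only [mul_assoc]
      rw [h2, h1, ← mul_assoc p, genP_mul_Xv_self R G hp]
  rw [hred]
  cases κ with
  | nil =>
      simp only [listE_nil, mul_one]
      by_cases hvw : v = w
      · subst hvw
        have hpq := genP_mul_genP_inter R G h₁ h₂ hp hq
        refine spanSet_subset_IHS R G ⟨v, p * q, α, δ, hpq, hα, heα, hδ, heδ, ?_⟩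
        simp only [mul_assoc]
      · rw [mul_assoc (listE R G α), genP_mul_genP_ne R G hp hq hvw, mul_zero, zero_mul]
        exact TwoSidedIdeal.zero_mem _
  | cons f κ' =>
      have hκ : VP G (f :: κ') := VP_append_right G hγ
      have heκ : EndsAt G (f :: κ') w := endsAt_of_append G (by simp) heγ
      by_cases hsf : G.s f = v
      · -- the path continues from v
        have hVPκ : VP G (α ++ f :: κ') := VP_append G hα hκ heα hsf
        have heVPκ : EndsAt G (α ++ f :: κ') w := endsAt_append G (by simp) heκ
        have key : ∀ (hpE : p * listE R G (f :: κ') = listE R G (f :: κ')),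
            w ∈ H₁ →
            listE R G α * (p * listE R G (f :: κ')) * q * listG R G δ
              ∈ IHS R G (H₁ ∩ H₂) ((H₁ ∪ S₁) ∩ (H₂ ∪ S₂) ∩ G.BH (H₁ ∩ H₂)) := by
          intro hpE hw1
          rw [hpE, ← listE_append]
          exact spanSet_subset_IHS R G ⟨w, q, α ++ f :: κ', δ,
            genP_inter_of_mem_left R G h₁ h₂ hw1 hq, hVPκ, heVPκ, hδ, heδ,
            by simp only [mul_assoc]⟩
        rcases hp with ⟨hv1, rfl⟩ | ⟨hS1, hn1, hf1, rfl⟩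
        · have hrf : G.r f ∈ H₁ := h₁.1 f (by rw [hsf]; exact hv1)
          exact key (Xv_mul_listE_cons R G κ' hsf) (her_path G h₁.1 κ' f hκ hrf heκ)
        · by_cases hrf : G.r f ∈ H₁
          · have hpE : vH R G H₁ v * listE R G (f :: κ') = listE R G (f :: κ') := by
              rw [listE_cons, ← mul_assoc, vH_mul_Xe_mem R G hf1 hsf hrf]
            exact key hpE (her_path G h₁.1 κ' f hκ hrf heκ)
          · have h3 : listE R G α * (vH R G H₁ v * listE R G (f :: κ')) * q * listG R G δ
                = listE R G α * ((vH R G H₁ v * Xe R G f) * listE R G κ') * q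
                  * listG R G δ := by
              simp only [listE_cons, mul_assoc]
            rw [h3, vH_mul_Xe_not_mem R G hf1 hsf hrf]
            simp only [zero_mul, mul_zero]
            exact TwoSidedIdeal.zero_mem _
      · have h3 : listE R G α * (p * listE R G (f :: κ')) * q * listG R G δ
            = listE R G α * ((p * Xe R G f) * listE R G κ') * q * listG R G δ := by
          simp only [listE_cons, mul_assoc]
        rw [h3, genP_mul_Xe_ne R G hp hsf]
        simp only [zero_mul, mul_zero]
        exact TwoSidedIdeal.zero_mem _

lemma lpaStar_mem_IHS (hH : G.Hereditary H₁) (hSB : S₁ ⊆ G.BH H₁)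
    {x : LPA R G} (hx : x ∈ IHS R G H₁ S₁) : lpaStar R G x ∈ IHS R G H₁ S₁ := by
  rw [mem_IHS_iff_mem_span R G hH hSB] at hx ⊢
  exact lpaStar_mem_span_spanSet R G hx

/-- Main product lemma: products of spanning monomials lie in the intersection ideal. -/
lemma spanSet_mul_spanSet (h₁ : G.Admissible H₁ S₁) (h₂ : G.Admissible H₂ S₂)
    {m₁ m₂ : LPA R G} (hm₁ : m₁ ∈ SpanSet R G H₁ S₁) (hm₂ : m₂ ∈ SpanSet R G H₂ S₂) :
    m₁ * m₂ ∈ IHS R G (H₁ ∩ H₂) ((H₁ ∪ S₁) ∩ (H₂ ∪ S₂) ∩ G.BH (H₁ ∩ H₂)) := by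
  obtain ⟨v, p, α, β, hp, hα, heα, hβ, heβ, rfl⟩ := hm₁
  obtain ⟨w, q, γ, δ, hq, hγ, heγ, hδ, heδ, rfl⟩ := hm₂
  by_cases hpre : β <+: γ
  · obtain ⟨κ, rfl⟩ := hpre
    exact mon_mul_mon_prefix R G h₁ h₂ hp hq hα heα hβ heβ hγ heγ hδ heδ
  · by_cases hpre' : γ <+: β
    · obtain ⟨κ, rfl⟩ := hpre'
      have hstar : (listE R G α * p * listG R G (γ ++ κ)) * (listE R G γ * q * listG R G δ)
          = lpaStar R G ((listE R G δ * q * listG R G γ)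
              * (listE R G (γ ++ κ) * p * listG R G α)) := by
        simp only [lpaStar_mul, lpaStar_listE, lpaStar_listG,
          lpaStar_genP R G hp, lpaStar_genP R G hq, mul_assoc]
      rw [hstar]
      have hmem := mon_mul_mon_prefix R G h₂ h₁ hq hp hδ heδ hγ heγ
        (VP_append_right G (l₁ := []) (by simpa using hβ))
        (by simpa using heβ) hα heα
      -- hmem is stated for the pair (H₂,S₂),(H₁,S₁); transport along commutativity
      have hmem' := lpaStar_mem_IHS R G
        (her_inter G h₂.1 h₁.1)
        (Set.inter_subset_right)
        hmem
      rwa [Set.inter_comm H₂ H₁, Set.inter_comm (H₂ ∪ S₂) (H₁ ∪ S₁)] at hmem'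
    · have hz : listG R G β * listE R G γ = 0 :=
        listG_mul_listE_zero R G hβ hγ hpre hpre'
      have h2 : (listE R G α * p * listG R G β) * (listE R G γ * q * listG R G δ)
          = listE R G α * (p * (listG R G β * listE R G γ)) * q * listG R G δ := by
        simp only [mul_assoc]
      rw [h2, hz]
      simp only [mul_zero, zero_mul]
      exact TwoSidedIdeal.zero_mem _

end LPAproof
namespace LPAproof
variable (R : Type) [CommRing R] (G : LPGraph)
variable {H S : Set G.V}

/-! ### Local units in `I(H,S)` -/

def GoodD (H S : Set G.V) (d : G.V × LPA R G × List G.E) : Prop :=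
  IsGenP R G H S d.1 d.2.1 ∧ VP G d.2.2 ∧ EndsAt G d.2.2 d.1

noncomputable def eEl (d : G.V × LPA R G × List G.E) : LPA R G :=
  listE R G d.2.2 * d.2.1 * listG R G d.2.2

lemma eEl_def (v : G.V) (p : LPA R G) (l : List G.E) :
    eEl R G (v, p, l) = listE R G l * p * listG R G l := rfl

lemma eEl_mem_spanSet {d : G.V × LPA R G × List G.E} (hd : GoodD R G H S d) :
    eEl R G d ∈ SpanSet R G H S :=
  ⟨d.1, d.2.1, d.2.2, d.2.2, hd.1, hd.2.1, hd.2.2, hd.2.1, hd.2.2, rfl⟩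

lemma prod_red {v : G.V} {p q : LPA R G} {α β κ δ : List G.E}
    (hpX : p * Xv R G v = p) (hγ : VP G (β ++ κ)) (heβ : EndsAt G β v) :
    (listE R G α * p * listG R G β) * (listE R G (β ++ κ) * q * listG R G δ)
      = listE R G α * (p * listE R G κ) * q * listG R G δ := by
  by_cases hβe : β = []
  · subst hβe
    simp only [listG_nil, mul_one, List.nil_append, mul_assoc]
  · have h1 : listG R G β * listE R G (β ++ κ) = Xv R G v * listE R G κ :=
      listG_mul_listE_prefix R G hβe hγ heβ
    have h2 : (listE R G α * p * listG R G β) * (listE R G (β ++ κ) * q * listG R G δ)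
        = listE R G α * (p * (listG R G β * listE R G (β ++ κ))) * q * listG R G δ := by
      simp only [mul_assoc]
    rw [h2, h1, ← mul_assoc p, hpX]

lemma eEl_mul_mon {v : G.V} {p : LPA R G} {l l' : List G.E}
    (hd : GoodD R G H S (v, p, l)) (hl' : VP G l') (he' : EndsAt G l' v) :
    eEl R G (v, p, l) * (listE R G l * p * listG R G l')
      = listE R G l * p * listG R G l' := by
  have hp : IsGenP R G H S v p := hd.1
  have hl : VP G l := hd.2.1
  have he : EndsAt G l v := hd.2.2
  have h := prod_red R G (κ := []) (q := p) (δ := l') (α := l)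
    (genP_mul_Xv_self R G hp) (by simpa using hl) he
  rw [eEl_def]
  simp only [List.append_nil] at h
  rw [h, listE_nil, mul_one, mul_assoc (listE R G l), genP_idem R G hp]

lemma eEl_idem {d : G.V × LPA R G × List G.E} (hd : GoodD R G H S d) :
    eEl R G d * eEl R G d = eEl R G d := by
  obtain ⟨v, p, l⟩ := d
  exact eEl_mul_mon R G hd hd.2.1 hd.2.2

lemma rev_prod_zero {v : G.V} {p q : LPA R G} {l rest : List G.E} {f : G.E}
    (hγ : VP G (l ++ f :: rest)) (he : EndsAt G l v)
    (hXv : Xv R G v * p = p) (hXg : Xg R G f * p = 0) :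
    (listE R G (l ++ f :: rest) * q * listG R G (l ++ f :: rest))
      * (listE R G l * p * listG R G l) = 0 := by
  by_cases hle : l = []
  · subst hle
    simp only [List.nil_append, listE_nil, listG_nil, one_mul, mul_one]
    have hz : listG R G (f :: rest) * p = 0 := by
      rw [listG_cons, mul_assoc, hXg, mul_zero]
    rw [mul_assoc, hz, mul_zero]
  · have hexp : (listE R G (l ++ f :: rest) * q * listG R G (l ++ f :: rest))
        * (listE R G l * p * listG R G l)
        = listE R G (l ++ f :: rest) * (q * ((listG R G (l ++ f :: rest) * listE R G l) * p))
            * listG R G l := by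
      simp only [mul_assoc]
    have h1 : listG R G (l ++ f :: rest) * listE R G l = listG R G (f :: rest) * Xv R G v := by
      rw [listG_append, mul_assoc,
        listG_mul_listE_self R G hle (VP_append_left G hγ) he]
    have hz : listG R G (f :: rest) * p = 0 := by
      rw [listG_cons, mul_assoc, hXg, mul_zero]
    rw [hexp, h1, mul_assoc (listG R G (f :: rest)) (Xv R G v) p, hXv, hz]
    simp

lemma Xg_mul_genP_not_mem {v : G.V} {p : LPA R G} {f : G.E}
    (hp : IsGenP R G H S v p) (hsf : G.s f = v) (hrf : G.r f ∉ H) :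
    Xg R G f * p = 0 ∨ p * listE R G [f] = Xe R G f * 1 := by
  rcases hp with ⟨hv, rfl⟩ | ⟨hS', hn, hfin, rfl⟩
  · exact Or.inr (by rw [listE_cons, listE_nil, ← mul_assoc, Xv_mul_Xe_of R G hsf])
  · exact Or.inl (Xg_mul_vH_not_mem R G hfin hsf hrf)

lemma tri_prefix {v w : G.V} {p q : LPA R G} {l : List G.E} {f : G.E} {rest : List G.E}
    (hd : GoodD R G H S (v, p, l)) (hd' : GoodD R G H S (w, q, l ++ f :: rest)) :
    eEl R G (v, p, l) * eEl R G (w, q, l ++ f :: rest) = eEl R G (w, q, l ++ f :: rest) ∨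
    (eEl R G (v, p, l) * eEl R G (w, q, l ++ f :: rest) = 0 ∧
      eEl R G (w, q, l ++ f :: rest) * eEl R G (v, p, l) = 0) := by
  have hp : IsGenP R G H S v p := hd.1
  have hl : VP G l := hd.2.1
  have he : EndsAt G l v := hd.2.2
  have hq : IsGenP R G H S w q := hd'.1
  have hγ : VP G (l ++ f :: rest) := hd'.2.1
  have heγ : EndsAt G (l ++ f :: rest) w := hd'.2.2
  have hred : eEl R G (v, p, l) * eEl R G (w, q, l ++ f :: rest)
      = listE R G l * (p * listE R G (f :: rest)) * q * listG R G (l ++ f :: rest) := by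
    rw [eEl_def, eEl_def]
    exact prod_red R G (genP_mul_Xv_self R G hp) hγ he
  by_cases hsf : G.s f = v
  · rcases hp with ⟨hv1, rfl⟩ | ⟨hS1, hn1, hf1, rfl⟩
    · left
      rw [hred, Xv_mul_listE_cons R G rest hsf, ← listE_append, eEl_def]
    · by_cases hrf : G.r f ∈ H
      · left
        have hpE : vH R G H v * listE R G (f :: rest) = listE R G (f :: rest) := by
          rw [listE_cons, ← mul_assoc, vH_mul_Xe_mem R G hf1 hsf hrf]
        rw [hred, hpE, ← listE_append, eEl_def]
      · right
        constructor
        · have h3 : listE R G l * (vH R G H v * listE R G (f :: rest)) * q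
                * listG R G (l ++ f :: rest)
              = listE R G l * ((vH R G H v * Xe R G f) * listE R G rest) * q
                * listG R G (l ++ f :: rest) := by
            simp only [listE_cons, mul_assoc]
          rw [hred, h3, vH_mul_Xe_not_mem R G hf1 hsf hrf]
          simp only [zero_mul, mul_zero]
        · rw [eEl_def, eEl_def]
          exact rev_prod_zero R G hγ he (Xv_mul_vH_self R G hf1)
            (Xg_mul_vH_not_mem R G hf1 hsf hrf)
  · right
    constructor
    · have h3 : listE R G l * (p * listE R G (f :: rest)) * q * listG R G (l ++ f :: rest)
          = listE R G l * ((p * Xe R G f) * listE R G rest) * q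
            * listG R G (l ++ f :: rest) := by
        simp only [listE_cons, mul_assoc]
      rw [hred, h3, genP_mul_Xe_ne R G hp hsf]
      simp only [zero_mul, mul_zero]
    · rw [eEl_def, eEl_def]
      exact rev_prod_zero R G hγ he (Xv_mul_genP_self R G hp)
        (Xg_mul_genP_ne R G hp hsf)

lemma eEl_mul_eEl_incomp {v w : G.V} {p q : LPA R G} {l m : List G.E}
    (hl : VP G l) (hm : VP G m) (h1 : ¬ l <+: m) (h2 : ¬ m <+: l) :
    eEl R G (v, p, l) * eEl R G (w, q, m) = 0 := by
  have hexp : eEl R G (v, p, l) * eEl R G (w, q, m)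
      = listE R G l * (p * ((listG R G l * listE R G m) * q)) * listG R G m := by
    rw [eEl_def, eEl_def]; simp only [mul_assoc]
  rw [hexp, listG_mul_listE_zero R G hl hm h1 h2]
  simp

lemma eEl_tri {d d' : G.V × LPA R G × List G.E}
    (hd : GoodD R G H S d) (hd' : GoodD R G H S d') (hne : d ≠ d') :
    eEl R G d * eEl R G d' = eEl R G d' ∨ eEl R G d' * eEl R G d = eEl R G d ∨
      (eEl R G d * eEl R G d' = 0 ∧ eEl R G d' * eEl R G d = 0) := by
  obtain ⟨v, p, l⟩ := d
  obtain ⟨w, q, m⟩ := d'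
  have hp : IsGenP R G H S v p := hd.1
  have hvl : VP G l := hd.2.1
  have hel : EndsAt G l v := hd.2.2
  have hq : IsGenP R G H S w q := hd'.1
  have hvm : VP G m := hd'.2.1
  have hem : EndsAt G m w := hd'.2.2
  by_cases h1 : l <+: m
  · by_cases h2 : m <+: l
    · -- l = m
      have hlm : l = m := by
        obtain ⟨κ, rfl⟩ := h1
        have := h2.length_le
        rw [List.length_append] at this
        have : κ = [] := List.length_eq_zero_iff.1 (by omega)
        subst this
        simp
      subst hlm
      by_cases hle : l = []
      · subst hle
        have hvw : v ≠ w := by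
          intro hvw
          subst hvw
          exact hne (by rw [isGenP_unique R G hp hq])
        right; right
        constructor
        · have hh : eEl R G (v, p, ([] : List G.E)) = p := by simp [eEl_def]
          have h2' : eEl R G (w, q, ([] : List G.E)) = q := by simp [eEl_def]
          rw [hh, h2', genP_mul_genP_ne R G hp hq hvw]
        · have hh : eEl R G (v, p, ([] : List G.E)) = p := by simp [eEl_def]
          have h2' : eEl R G (w, q, ([] : List G.E)) = q := by simp [eEl_def]
          rw [hh, h2', genP_mul_genP_ne R G hq hp (Ne.symm hvw)]
      · exfalso
        have hvw : v = w := endsAt_unique G hle hel hem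
        subst hvw
        exact hne (by rw [isGenP_unique R G hp hq])
    · obtain ⟨κ, rfl⟩ := h1
      cases κ with
      | nil => exact absurd (by simp) h2
      | cons f rest =>
          rcases tri_prefix R G hd hd' with h | ⟨hz1, hz2⟩
          · exact Or.inl h
          · exact Or.inr (Or.inr ⟨hz1, hz2⟩)
  · by_cases h2 : m <+: l
    · obtain ⟨κ, rfl⟩ := h2
      cases κ with
      | nil => exact absurd (by simp) h1
      | cons f rest =>
          rcases tri_prefix R G hd' hd with h | ⟨hz1, hz2⟩
          · exact Or.inr (Or.inl h)
          · exact Or.inr (Or.inr ⟨hz2, hz1⟩)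
    · exact Or.inr (Or.inr ⟨eEl_mul_eEl_incomp R G hvl hvm h1 h2,
        eEl_mul_eEl_incomp R G hvm hvl h2 h1⟩)

lemma local_unit : ∀ (n : ℕ) (F : Finset (G.V × LPA R G × List G.E)), F.card ≤ n →
    (∀ d ∈ F, GoodD R G H S d) →
    ∃ u ∈ Submodule.span R (SpanSet R G H S), ∀ d ∈ F, u * eEl R G d = eEl R G d := by
  intro n
  induction n with
  | zero =>
      intro F hcard _
      have : F = ∅ := Finset.card_eq_zero.1 (Nat.le_zero.1 hcard)
      subst this
      exact ⟨0, Submodule.zero_mem _, fun d hd => absurd hd (by simp)⟩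
  | succ n ih =>
      intro F hcard hF
      classical
      by_cases hdom : ∃ d ∈ F, ∃ d' ∈ F, d ≠ d' ∧ eEl R G d * eEl R G d' = eEl R G d'
      · obtain ⟨d, hdF, d', hd'F, hne, hdd'⟩ := hdom
        have hcard' : (F.erase d').card ≤ n := by
          rw [Finset.card_erase_of_mem hd'F]
          omega
        obtain ⟨u, hu, hu2⟩ := ih (F.erase d') hcard'
          (fun d'' hd'' => hF d'' (Finset.mem_of_mem_erase hd''))
        refine ⟨u, hu, fun d'' hd'' => ?_⟩
        by_cases hd''d' : d'' = d'
        · subst hd''d'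
          rw [← hdd', ← mul_assoc, hu2 d (Finset.mem_erase.2 ⟨hne, hdF⟩), hdd']
        · exact hu2 d'' (Finset.mem_erase.2 ⟨hd''d', hd''⟩)
      · push_neg at hdom
        refine ⟨∑ d ∈ F, eEl R G d, Submodule.sum_mem _
          (fun d hd => Submodule.subset_span (eEl_mem_spanSet R G (hF d hd))),
          fun d hd => ?_⟩
        rw [Finset.sum_mul]
        rw [Finset.sum_eq_single_of_mem d hd]
        · exact eEl_idem R G (hF d hd)
        · intro d' hd' hne
          rcases eEl_tri R G (hF d' hd') (hF d hd) hne with h | h | ⟨hz1, -⟩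
          · exact absurd h (hdom d' hd' d hd hne)
          · exact absurd h (hdom d hd d' hd' (Ne.symm hne))
          · exact hz1
end LPAproof
namespace LPAproof
variable (R : Type) [CommRing R] (G : LPGraph)
variable {H₁ S₁ H₂ S₂ : Set G.V}

lemma span_mul_span_mem (h₁ : G.Admissible H₁ S₁) (h₂ : G.Admissible H₂ S₂)
    {u x : LPA R G} (hu : u ∈ Submodule.span R (SpanSet R G H₁ S₁))
    (hx : x ∈ Submodule.span R (SpanSet R G H₂ S₂)) :
    u * x ∈ IHS R G (H₁ ∩ H₂) ((H₁ ∪ S₁) ∩ (H₂ ∪ S₂) ∩ G.BH (H₁ ∩ H₂)) := by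
  induction hu using Submodule.span_induction with
  | mem m hm =>
      induction hx using Submodule.span_induction with
      | mem m' hm' => exact spanSet_mul_spanSet R G h₁ h₂ hm hm'
      | zero => rw [mul_zero]; exact TwoSidedIdeal.zero_mem _
      | add a b _ _ ha hb => rw [mul_add]; exact TwoSidedIdeal.add_mem _ ha hb
      | smul r a _ ha =>
          rw [mul_smul_comm, Algebra.smul_def]
          exact TwoSidedIdeal.mul_mem_left _ _ _ ha
  | zero => rw [zero_mul]; exact TwoSidedIdeal.zero_mem _
  | add a b _ _ ha hb => rw [add_mul]; exact TwoSidedIdeal.add_mem _ ha hb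
  | smul r a _ ha =>
      rw [smul_mul_assoc, Algebra.smul_def]
      exact TwoSidedIdeal.mul_mem_left _ _ _ ha

lemma inter_le_IHS_left (h₁ : G.Admissible H₁ S₁) :
    IHS R G (H₁ ∩ H₂) ((H₁ ∪ S₁) ∩ (H₂ ∪ S₂) ∩ G.BH (H₁ ∩ H₂)) ≤ IHS R G H₁ S₁ := by
  intro x hx
  refine TwoSidedIdeal.mem_span_iff.1 hx _ ?_
  rintro z (⟨v, hv, rfl⟩ | ⟨v, hv, rfl⟩)
  · exact TwoSidedIdeal.subset_span (Set.mem_union_left _ ⟨v, hv.1, rfl⟩)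
  · show vH R G (H₁ ∩ H₂) v ∈ IHS R G H₁ S₁
    have hBH : v ∈ G.BH (H₁ ∩ H₂) := hv.2
    have hfinI : (edgeSet G (H₁ ∩ H₂) v).Finite := hBH.2.2.1
    rcases hv.1.1 with hvH1 | hvS1
    · rw [← Xv_mul_vH_self R G hfinI]
      exact TwoSidedIdeal.mul_mem_right _ _ _
        (TwoSidedIdeal.subset_span (Set.mem_union_left _ ⟨v, hvH1, rfl⟩))
    · have hfin1 : (edgeSet G H₁ v).Finite := (h₁.2.2 hvS1).2.2.1
      have habs : vH R G H₁ v * vH R G (H₁ ∩ H₂) v = vH R G (H₁ ∩ H₂) v := by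
        rw [vH_mul_vH R G hfin1 hfinI, Set.inter_eq_right.2 Set.inter_subset_left]
      rw [← habs]
      exact TwoSidedIdeal.mul_mem_right _ _ _
        (TwoSidedIdeal.subset_span (Set.mem_union_right _ ⟨v, hvS1, rfl⟩))

lemma inter_le_IHS_right (h₂ : G.Admissible H₂ S₂) :
    IHS R G (H₁ ∩ H₂) ((H₁ ∪ S₁) ∩ (H₂ ∪ S₂) ∩ G.BH (H₁ ∩ H₂)) ≤ IHS R G H₂ S₂ := by
  intro x hx
  refine TwoSidedIdeal.mem_span_iff.1 hx _ ?_
  rintro z (⟨v, hv, rfl⟩ | ⟨v, hv, rfl⟩)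
  · exact TwoSidedIdeal.subset_span (Set.mem_union_left _ ⟨v, hv.2, rfl⟩)
  · show vH R G (H₁ ∩ H₂) v ∈ IHS R G H₂ S₂
    have hBH : v ∈ G.BH (H₁ ∩ H₂) := hv.2
    have hfinI : (edgeSet G (H₁ ∩ H₂) v).Finite := hBH.2.2.1
    rcases hv.1.2 with hvH2 | hvS2
    · rw [← Xv_mul_vH_self R G hfinI]
      exact TwoSidedIdeal.mul_mem_right _ _ _
        (TwoSidedIdeal.subset_span (Set.mem_union_left _ ⟨v, hvH2, rfl⟩))
    · have hfin2 : (edgeSet G H₂ v).Finite := (h₂.2.2 hvS2).2.2.1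
      have habs : vH R G H₂ v * vH R G (H₁ ∩ H₂) v = vH R G (H₁ ∩ H₂) v := by
        rw [vH_mul_vH R G hfin2 hfinI, Set.inter_eq_right.2 Set.inter_subset_right]
      rw [← habs]
      exact TwoSidedIdeal.mul_mem_right _ _ _
        (TwoSidedIdeal.subset_span (Set.mem_union_right _ ⟨v, hvS2, rfl⟩))

lemma main_hard (h₁ : G.Admissible H₁ S₁) (h₂ : G.Admissible H₂ S₂) :
    IHS R G H₁ S₁ ⊓ IHS R G H₂ S₂ ≤
      IHS R G (H₁ ∩ H₂) ((H₁ ∪ S₁) ∩ (H₂ ∪ S₂) ∩ G.BH (H₁ ∩ H₂)) := by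
  intro x hx
  classical
  have hx1 : x ∈ IHS R G H₁ S₁ := ((TwoSidedIdeal.mem_inf _).1 hx).1
  have hx2 : x ∈ IHS R G H₂ S₂ := ((TwoSidedIdeal.mem_inf _).1 hx).2
  rw [mem_IHS_iff_mem_span R G h₁.1 h₁.2.2] at hx1
  rw [mem_IHS_iff_mem_span R G h₂.1 h₂.2.2] at hx2
  obtain ⟨c, hsupp, hrep⟩ := Submodule.mem_span_set.1 hx1
  have hchoice : ∀ m ∈ c.support, ∃ d, GoodD R G H₁ S₁ d ∧ eEl R G d * m = m := by
    intro m hm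
    obtain ⟨v, p, l, l', hp, hl, he, hl', he', rfl⟩ := hsupp hm
    exact ⟨(v, p, l), ⟨hp, hl, he⟩, eEl_mul_mon R G ⟨hp, hl, he⟩ hl' he'⟩
  choose dfun hd1 hd2 using hchoice
  set F : Finset (G.V × LPA R G × List G.E) :=
    c.support.attach.image (fun m => dfun m.1 m.2) with hF
  have hFgood : ∀ d ∈ F, GoodD R G H₁ S₁ d := by
    intro d hd
    obtain ⟨⟨m, hm⟩, -, rfl⟩ := Finset.mem_image.1 hd
    exact hd1 m hm
  obtain ⟨u, hu, hu2⟩ := local_unit R G F.card F le_rfl hFgood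
  have hux : u * x = x := by
    rw [← hrep, Finsupp.sum, Finset.mul_sum]
    refine Finset.sum_congr rfl fun m hm => ?_
    have h5 : u * m = m := by
      conv_lhs => rw [← hd2 m hm]
      rw [← mul_assoc, hu2 (dfun m hm)
        (Finset.mem_image.2 ⟨⟨m, hm⟩, Finset.mem_attach _ _, rfl⟩), hd2 m hm]
    rw [mul_smul_comm, h5]
  rw [← hux]
  exact span_mul_span_mem R G h₁ h₂ hu hx2

end LPAproof

/-- `I(H₁,S₁) ∩ I(H₂,S₂) = I(H₁∩H₂, (H₁∪S₁)∩(H₂∪S₂)∩B_{H₁∩H₂})`. -/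
theorem IHS_inter (G : LPGraph) (R : Type) [CommRing R] (H₁ S₁ H₂ S₂ : Set G.V)
    (h₁ : G.Admissible H₁ S₁) (h₂ : G.Admissible H₂ S₂) :
    IHS R G H₁ S₁ ⊓ IHS R G H₂ S₂ =
      IHS R G (H₁ ∩ H₂) ((H₁ ∪ S₁) ∩ (H₂ ∪ S₂) ∩ G.BH (H₁ ∩ H₂)) := by
  refine le_antisymm (LPAproof.main_hard R G h₁ h₂) (le_inf ?_ ?_)
  · exact LPAproof.inter_le_IHS_left R G h₁
  · exact LPAproof.inter_le_IHS_right R G h₂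
end
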